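/- Let Q̄ be an imprecise probability tree and E_V the associated game-theoretic upper expectation. For every situation s ∈ 𝒳* and every sequence (f_n)_{n∈ℕ₀} of global variables that is uniformly bounded below (there is a real c with f_n(ω) ≥ c for all n and all ω), one has E_V(liminf_{n→∞} f_n | s) ≤ liminf_{n→∞} E_V(f_n | s), where liminf_{n→∞} f_n is taken pointwise. -/

import Mathlib

open Filter MeasureTheory
open scoped Classical ENNReal NNReal

namespace UEP

variable {X : Type*}

/-- The string of the first `n` states of a path `ω`. -/
def pref (ω : ℕ → X) (n : ℕ) : List X := List.ofFn (fun i : Fin n => ω i)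

/-- The cylinder event of a situation `s`. -/
def cyl (s : List X) : Set (ℕ → X) := {ω : ℕ → X | pref ω s.length = s}

/-- `f` depends only on the first `n` states. -/
def NMeas (n : ℕ) (f : (ℕ → X) → EReal) : Prop :=
  ∀ ω₁ ω₂ : ℕ → X, pref ω₁ n = pref ω₂ n → f ω₁ = f ω₂

/-- `f` is bounded below (by a real constant). -/
def IsBddBelow (f : (ℕ → X) → EReal) : Prop := ∃ c : ℝ, ∀ ω, (c : EReal) ≤ f ω

/-- `f` is bounded above (by a real constant). -/
def IsBddAbove (f : (ℕ → X) → EReal) : Prop := ∃ c : ℝ, ∀ ω, f ω ≤ (c : EReal)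

/-- `f` is real-valued and bounded. -/
def IsGambleVal (f : (ℕ → X) → EReal) : Prop :=
  ∃ a b : ℝ, ∀ ω, (a : EReal) ≤ f ω ∧ f ω ≤ (b : EReal)

/-- `f` is an `n`-measurable gamble. -/
def IsNGamble (n : ℕ) (f : (ℕ → X) → EReal) : Prop := NMeas n f ∧ IsGambleVal f

/-- `f` is a finitary gamble. -/
def IsFinitaryGamble (f : (ℕ → X) → EReal) : Prop := (∃ n, NMeas n f) ∧ IsGambleVal f

/-- `f` is finitary. -/
def IsFinitary (f : (ℕ → X) → EReal) : Prop := ∃ n, NMeas n f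

/-- pointwise convergence of a sequence of global variables. -/
def PtwLim (fs : ℕ → (ℕ → X) → EReal) (f : (ℕ → X) → EReal) : Prop :=
  ∀ ω, Tendsto (fun n => fs n ω) atTop (nhds (f ω))

/-- the sequence is uniformly bounded below. -/
def UnifBddBelow (fs : ℕ → (ℕ → X) → EReal) : Prop :=
  ∃ c : ℝ, ∀ n ω, (c : EReal) ≤ fs n ω

/-- `f` belongs to `V̄_{b,lim}`: bounded below and a pointwise limit of finitary gambles. -/
def Vblim (f : (ℕ → X) → EReal) : Prop :=
  IsBddBelow f ∧ ∃ fs : ℕ → (ℕ → X) → EReal,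
    (∀ n, IsFinitaryGamble (fs n)) ∧ PtwLim fs f

/-- A coherent upper expectation on the finite state space `X`. -/
def IsCoherent [Fintype X] (Q : (X → ℝ) → ℝ) : Prop :=
  (∀ f : X → ℝ, Q f ≤ ⨆ x, f x) ∧
  (∀ f g : X → ℝ, Q (fun x => f x + g x) ≤ Q f + Q g) ∧
  (∀ l : ℝ, 0 ≤ l → ∀ f : X → ℝ, Q (fun x => l * f x) = l * Q f)

/-- Axiom P1: compatibility with the local models. -/
def P1 (Q : List X → (X → ℝ) → ℝ) (E : ((ℕ → X) → EReal) → List X → EReal) : Prop :=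
  ∀ (s : List X) (f : X → ℝ),
    E (fun ω => (f (ω s.length) : EReal)) s = ((Q s f : ℝ) : EReal)

/-- Axiom P2. -/
def P2 (E : ((ℕ → X) → EReal) → List X → EReal) : Prop :=
  ∀ f : (ℕ → X) → EReal, IsFinitaryGamble f → ∀ s : List X,
    E f s = E (fun ω => if ω ∈ cyl s then f ω else 0) s

/-- Axiom P3 (inequality form). -/
def P3le (E : ((ℕ → X) → EReal) → List X → EReal) : Prop :=
  ∀ f : (ℕ → X) → EReal, IsFinitaryGamble f → ∀ (n : ℕ) (ω : ℕ → X),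
    E f (pref ω n) ≤ E (fun ω' => E f (pref ω' (n + 1))) (pref ω n)

/-- Axiom P3 with equality: the law of iterated upper expectations. -/
def P3eq (E : ((ℕ → X) → EReal) → List X → EReal) : Prop :=
  ∀ f : (ℕ → X) → EReal, IsFinitaryGamble f → ∀ (n : ℕ) (ω : ℕ → X),
    E f (pref ω n) = E (fun ω' => E f (pref ω' (n + 1))) (pref ω n)

/-- Axiom P4: monotonicity. -/
def P4 (E : ((ℕ → X) → EReal) → List X → EReal) : Prop :=
  ∀ f g : (ℕ → X) → EReal, (∀ ω, f ω ≤ g ω) → ∀ s : List X, E f s ≤ E g s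

/-- Axiom P5. -/
def P5 (E : ((ℕ → X) → EReal) → List X → EReal) : Prop :=
  ∀ (s : List X) (f : (ℕ → X) → EReal) (fs : ℕ → (ℕ → X) → EReal),
    (∀ n, IsFinitaryGamble (fs n)) → UnifBddBelow fs → PtwLim fs f →
    E f s ≤ limsup (fun n => E (fs n) s) atTop

/-- Axiom P6. -/
def P6 (E : ((ℕ → X) → EReal) → List X → EReal) : Prop :=
  ∀ f : (ℕ → X) → EReal, Vblim f → ∀ s : List X,
    ∃ fs : ℕ → (ℕ → X) → EReal,
      (∀ n, IsNGamble n (fs n)) ∧ UnifBddBelow fs ∧ PtwLim fs f ∧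
      limsup (fun n => E (fs n) s) atTop ≤ E f s

/-- Axiom P7. -/
def P7 (E : ((ℕ → X) → EReal) → List X → EReal) : Prop :=
  ∀ (f : (ℕ → X) → EReal) (s : List X),
    E f s = sInf {y : EReal | ∃ g : (ℕ → X) → EReal,
      Vblim g ∧ (∀ ω, f ω ≤ g ω) ∧ y = E g s}

/-- bundled axioms P1–P5. -/
def P15 (Q : List X → (X → ℝ) → ℝ) (E : ((ℕ → X) → EReal) → List X → EReal) : Prop :=
  P1 Q E ∧ P2 E ∧ P3le E ∧ P4 E ∧ P5 E

/-- `Qe` extends `Q` from gambles to extended-real variables. -/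
def ExtendsLocal [Fintype X] (Q : (X → ℝ) → ℝ) (Qe : (X → EReal) → EReal) : Prop :=
  ∀ f : X → ℝ, Qe (fun x => (f x : EReal)) = ((Q f : ℝ) : EReal)

/-- continuity with respect to upper cuts. -/
def UpperCutCont (Qe : (X → EReal) → EReal) : Prop :=
  ∀ f : X → EReal, (∃ c : ℝ, ∀ x, (c : EReal) ≤ f x) →
    Tendsto (fun c : ℝ => Qe (fun x => min (f x) (c : EReal))) atTop (nhds (Qe f))

/-- continuity with respect to lower cuts. -/
def LowerCutCont (Qe : (X → EReal) → EReal) : Prop :=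
  ∀ f : X → EReal,
    Tendsto (fun c : ℝ => Qe (fun x => max (f x) (c : EReal))) atBot (nhds (Qe f))

/-- `Qe` is the extension of the imprecise probability tree `Q` satisfying
continuity with respect to upper and lower cuts. -/
def LocalExtension [Fintype X] (Q : List X → (X → ℝ) → ℝ)
    (Qe : List X → (X → EReal) → EReal) : Prop :=
  ∀ s : List X, ExtendsLocal (Q s) (Qe s) ∧ UpperCutCont (Qe s) ∧ LowerCutCont (Qe s)

/-- supermartingale with respect to the extended local models `Qe`. -/
def IsSupermart (Qe : List X → (X → EReal) → EReal) (M : List X → EReal) : Prop :=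
  ∀ s : List X, Qe s (fun x => M (s ++ [x])) ≤ M s

/-- a bounded-below process. -/
def MBddBelow (M : List X → EReal) : Prop := ∃ c : ℝ, ∀ s : List X, (c : EReal) ≤ M s

/-- the game-theoretic upper expectation (Shafer–Vovk). -/
noncomputable def EV (Qe : List X → (X → EReal) → EReal)
    (f : (ℕ → X) → EReal) (s : List X) : EReal :=
  sInf {y : EReal | ∃ M : List X → EReal, MBddBelow M ∧ IsSupermart Qe M ∧
    (∀ ω ∈ cyl s, f ω ≤ liminf (fun n => M (pref ω n)) atTop) ∧ y = M s}

/-- a canonical path passing through the situation `s`. -/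
noncomputable def extPath [Nonempty X] (s : List X) : ℕ → X :=
  fun i => if h : i < s.length then s.get ⟨i, h⟩ else Classical.arbitrary X

/-- extended-real addition with the convention `(+∞) + (−∞) = (−∞) + (+∞) = +∞`. -/
noncomputable def eadd (a b : EReal) : EReal := if a = ⊤ ∨ b = ⊤ then ⊤ else a + b

/-- extended-real finite sums with the conventions `0·(±∞) = 0` and
`(+∞) + (−∞) = +∞`. -/
noncomputable def esum {α : Type*} (s : Finset α) (f : α → EReal) : EReal :=
  if ∃ x ∈ s, f x = ⊤ then ⊤ else ∑ x ∈ s, f x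

/-- the σ-algebra `ℱ` on paths generated by all cylinder events. -/
def cylSA (X : Type*) : MeasurableSpace (ℕ → X) :=
  MeasurableSpace.generateFrom {A : Set (ℕ → X) | ∃ s : List X, A = cyl s}

/-- a precise probability tree: a probability mass function in every situation. -/
def IsTree [Fintype X] (p : List X → X → ℝ) : Prop :=
  ∀ s : List X, (∀ x, 0 ≤ p s x) ∧ ∑ x, p s x = 1

/-- the `i`-th entry (0-based) of a list, i.e. the `(i+1)`-th state. -/
noncomputable def nthL [Nonempty X] (z : List X) (i : ℕ) : X :=
  z.getD i (Classical.arbitrary X)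

/-- `P` is the family of conditional probability measures on `ℱ` determined by
the precise probability tree `p` via the product formula on cylinder events. -/
def CylProp [Fintype X] [Nonempty X] (p : List X → X → ℝ)
    (P : List X → @Measure (ℕ → X) (cylSA X)) : Prop :=
  ∀ s z : List X,
    P s (cyl z) =
      if s.length < z.length ∧ z.take s.length = s then
        ∏ i ∈ Finset.Ico s.length z.length, ENNReal.ofReal (p (z.take i) (nthL z i))
      else if z.length ≤ s.length ∧ s.take z.length = z then 1 else 0

/-- the nonnegative part of an extended real, as an `ℝ≥0∞`. -/
noncomputable def toENN (a : EReal) : ℝ≥0∞ := if a = ⊤ then ⊤ else ENNReal.ofReal a.toReal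

/-- `∫ f⁺ dP`. -/
noncomputable def lpos (P : @Measure (ℕ → X) (cylSA X)) (f : (ℕ → X) → EReal) : ℝ≥0∞ :=
  @MeasureTheory.lintegral _ (cylSA X) P (fun ω => toENN (f ω))

/-- `∫ f⁻ dP`. -/
noncomputable def lneg (P : @Measure (ℕ → X) (cylSA X)) (f : (ℕ → X) → EReal) : ℝ≥0∞ :=
  @MeasureTheory.lintegral _ (cylSA X) P (fun ω => toENN (-(f ω)))

/-- the Lebesgue integral `∫ f dP = ∫ f⁺ dP − ∫ f⁻ dP`. -/
noncomputable def emeas (P : @Measure (ℕ → X) (cylSA X)) (f : (ℕ → X) → EReal) : EReal :=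
  (lpos P f : EReal) - (lneg P f : EReal)

/-- `ℱ`-measurability of a global variable. -/
def FMeasurable (f : (ℕ → X) → EReal) : Prop := @Measurable _ _ (cylSA X) _ f

/-- the Lebesgue integral `∫ f dP` exists. -/
def EMeasExists (P : @Measure (ℕ → X) (cylSA X)) (f : (ℕ → X) → EReal) : Prop :=
  FMeasurable f ∧ min (lpos P f) (lneg P f) < ⊤

/-- the upper integral `Ē¹`. -/
noncomputable def upInt1 (P : @Measure (ℕ → X) (cylSA X)) (f : (ℕ → X) → EReal) : EReal :=
  sInf {y : EReal | ∃ g : (ℕ → X) → EReal,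
    FMeasurable g ∧ IsBddBelow g ∧ (∀ ω, f ω ≤ g ω) ∧ y = emeas P g}

/-- the upper integral `Ē²`. -/
noncomputable def upInt2 (P : @Measure (ℕ → X) (cylSA X)) (f : (ℕ → X) → EReal) : EReal :=
  sInf {y : EReal | ∃ g : (ℕ → X) → EReal,
    EMeasExists P g ∧ (∀ ω, f ω ≤ g ω) ∧ y = emeas P g}

/-- the game-theoretic upper expectation with respect to a precise probability tree. -/
noncomputable def EVp [Fintype X] (p : List X → X → ℝ)
    (f : (ℕ → X) → EReal) (s : List X) : EReal :=
  sInf {y : EReal | ∃ M : List X → EReal, MBddBelow M ∧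
    (∀ t : List X, ∑ x, ((p t x : ℝ) : EReal) * M (t ++ [x]) ≤ M t) ∧
    (∀ ω ∈ cyl s, f ω ≤ liminf (fun n => M (pref ω n)) atTop) ∧ y = M s}

/-- the credal set of a coherent upper expectation. -/
def credal [Fintype X] (Q : (X → ℝ) → ℝ) : Set (X → ℝ) :=
  {q | (∀ x, 0 ≤ q x) ∧ (∑ x, q x = 1) ∧ ∀ f : X → ℝ, ∑ x, f x * q x ≤ Q f}

/-- a precise probability tree compatible with the imprecise probability tree `Q`. -/
def Compat [Fintype X] (Q : List X → (X → ℝ) → ℝ) (p : List X → X → ℝ) : Prop :=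
  ∀ s : List X, p s ∈ credal (Q s)

/-- the global measure-theoretic upper expectation. -/
noncomputable def Emeas [Fintype X] (Q : List X → (X → ℝ) → ℝ)
    (P : (List X → X → ℝ) → List X → @Measure (ℕ → X) (cylSA X))
    (f : (ℕ → X) → EReal) (s : List X) : EReal :=
  sSup {y : EReal | ∃ p : List X → X → ℝ, Compat Q p ∧ y = upInt1 (P p s) f}


set_option linter.unusedSectionVars false
set_option maxHeartbeats 1000000



section Stage1
variable {X : Type*} [Fintype X] [Nonempty X]
variable {Q : (X → ℝ) → ℝ} (hQ : IsCoherent Q)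
include hQ

lemma Q_le_of_forall_le {f : X → ℝ} {M : ℝ} (h : ∀ x, f x ≤ M) : Q f ≤ M :=
  (hQ.1 f).trans (ciSup_le h)

lemma Q_mono {f g : X → ℝ} (h : ∀ x, f x ≤ g x) : Q f ≤ Q g := by
  have h1 : Q (fun x => g x + (f x - g x)) ≤ Q g + Q (fun x => f x - g x) := hQ.2.1 _ _
  have h2 : Q (fun x => f x - g x) ≤ 0 := Q_le_of_forall_le hQ (fun x => by linarith [h x])
  have h3 : (fun x => g x + (f x - g x)) = f := by funext x; ring
  rw [h3] at h1; linarith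

lemma Q_const (r : ℝ) : Q (fun _ => r) = r := by
  have h0 : Q (fun _ => (0:ℝ)) = 0 := by
    have := hQ.2.2 0 le_rfl (fun _ => (0:ℝ)); simpa using this
  have hle : Q (fun _ => r) ≤ r := Q_le_of_forall_le hQ fun _ => le_rfl
  have h1 : Q (fun x : X => r + (-r)) ≤ Q (fun _ => r) + Q (fun _ => (-r : ℝ)) := hQ.2.1 _ _
  have h2 : Q (fun _ : X => (-r : ℝ)) ≤ -r := Q_le_of_forall_le hQ fun _ => le_rfl
  have h3 : (fun _ : X => r + (-r)) = (fun _ : X => (0:ℝ)) := by funext x; ring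
  rw [h3, h0] at h1
  linarith

lemma le_Q_of_forall_le {f : X → ℝ} {m : ℝ} (h : ∀ x, m ≤ f x) : m ≤ Q f := by
  have h1 : Q (fun x => f x + (m - f x)) ≤ Q f + Q (fun x => m - f x) := hQ.2.1 _ _
  have h2 : Q (fun x => m - f x) ≤ 0 := Q_le_of_forall_le hQ fun x => by linarith [h x]
  have h3 : (fun x => f x + (m - f x)) = fun _ => m := by funext x; ring
  rw [h3, Q_const hQ] at h1; linarith

lemma Q_add_const (f : X → ℝ) (r : ℝ) : Q (fun x => f x + r) ≤ Q f + r := by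
  have h1 := hQ.2.1 f (fun _ => r)
  have h2 := Q_const hQ (X := X) r
  simp only [h2] at h1
  exact h1

end Stage1

/-! ### EReal helpers -/

lemma ereal_top_le {x : EReal} (h : ∀ r : ℝ, (r : EReal) ≤ x) : x = ⊤ := by
  by_contra hx
  cases x with
  | bot => simpa using h 0
  | coe r => have := h (r + 1); rw [EReal.coe_le_coe_iff] at this; linarith
  | top => exact hx rfl

lemma ereal_le_add_of_forall_pos {a b : EReal} (h : ∀ δ : ℝ, 0 < δ → a ≤ b + (δ : EReal)) :
    a ≤ b := by
  cases b with
  | bot =>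
    have := h 1 one_pos
    simpa using this
  | coe t =>
    cases a with
    | bot => exact bot_le
    | coe u =>
      rw [EReal.coe_le_coe_iff]
      refine le_of_forall_pos_le_add fun δ hδ => ?_
      have := h δ hδ
      rw [show ((t : EReal) + (δ : EReal)) = ((t + δ : ℝ) : EReal) by
        exact_mod_cast rfl] at this
      exact EReal.coe_le_coe_iff.1 this
    | top =>
      have := h 1 one_pos
      rw [show ((t : EReal) + (1 : ℝ)) = ((t + 1 : ℝ) : EReal) by exact_mod_cast rfl] at this
      exact absurd (top_le_iff.1 this) (EReal.coe_ne_top _)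
  | top => exact le_top

lemma ereal_iSup_min_coe (y : EReal) (hy : y ≠ ⊥) : ⨆ d : ℝ, min y (d : EReal) = y := by
  refine le_antisymm (iSup_le fun d => min_le_left _ _) ?_
  cases y with
  | bot => exact absurd rfl hy
  | coe r => exact le_iSup_of_le r (by simp)
  | top =>
    have h : ∀ r : ℝ, (r : EReal) ≤ ⨆ d : ℝ, min (⊤:EReal) (d : EReal) :=
      fun r => le_iSup_of_le r (by simp)
    rw [ereal_top_le h]

section Stage2
variable {X : Type*} [Fintype X] [Nonempty X]
variable {Q : (X → ℝ) → ℝ} {QE : (X → EReal) → EReal}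

/-- the real restriction of the upper cut of `g` at level `d`. -/
noncomputable def rcut (g : X → EReal) (d : ℝ) : X → ℝ := fun x => (min (g x) (d : EReal)).toReal

lemma cut_ne_top (g : X → EReal) (d : ℝ) (x : X) : min (g x) (d : EReal) ≠ ⊤ :=
  ((min_le_right _ _).trans_lt (EReal.coe_lt_top d)).ne

lemma cut_ne_bot {g : X → EReal} {c₀ : ℝ} (hb : ∀ x, (c₀ : EReal) ≤ g x) (d : ℝ) (x : X) :
    min (g x) (d : EReal) ≠ ⊥ := by
  have : ((min c₀ d : ℝ) : EReal) ≤ min (g x) (d : EReal) := by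
    refine le_min ((EReal.coe_le_coe_iff.2 (min_le_left _ _)).trans (hb x))
      (EReal.coe_le_coe_iff.2 (min_le_right _ _))
  exact ((EReal.bot_lt_coe _).trans_le this).ne'

lemma cut_coe {g : X → EReal} {c₀ : ℝ} (hb : ∀ x, (c₀ : EReal) ≤ g x) (d : ℝ) :
    (fun x => ((rcut g d x : ℝ) : EReal)) = (fun x => min (g x) (d : EReal)) := by
  funext x
  exact EReal.coe_toReal (cut_ne_top g d x) (cut_ne_bot hb d x)


lemma bb_cut {g : X → EReal} {c₀ : ℝ} (hb : ∀ x, (c₀ : EReal) ≤ g x) (d : ℝ) :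
    ∀ x, ((min c₀ d : ℝ) : EReal) ≤ min (g x) (d : EReal) := fun x =>
  le_min ((EReal.coe_le_coe_iff.2 (min_le_left _ _)).trans (hb x))
    (EReal.coe_le_coe_iff.2 (min_le_right _ _))

variable (hQ : IsCoherent Q) (hx : ExtendsLocal Q QE) (hu : UpperCutCont QE)

include hx in
lemma QE_cut {g : X → EReal} {c₀ : ℝ} (hb : ∀ x, (c₀ : EReal) ≤ g x) (d : ℝ) :
    QE (fun x => min (g x) (d : EReal)) = ((Q (rcut g d) : ℝ) : EReal) := by
  rw [← cut_coe hb d]; exact hx _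

include hQ hx in
lemma QE_cut_mono {g : X → EReal} {c₀ : ℝ} (hb : ∀ x, (c₀ : EReal) ≤ g x)
    {d d' : ℝ} (h : d ≤ d') :
    QE (fun x => min (g x) (d : EReal)) ≤ QE (fun x => min (g x) (d' : EReal)) := by
  rw [QE_cut hx hb d, QE_cut hx hb d', EReal.coe_le_coe_iff]
  refine Q_mono hQ fun x => ?_
  exact EReal.toReal_le_toReal (min_le_min le_rfl (EReal.coe_le_coe_iff.2 h))
    (cut_ne_bot hb d x) (cut_ne_top g d' x)

include hQ hx hu in
lemma QE_eq_iSup {g : X → EReal} {c₀ : ℝ} (hb : ∀ x, (c₀ : EReal) ≤ g x) :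
    QE g = ⨆ d : ℝ, QE (fun x => min (g x) (d : EReal)) := by
  refine tendsto_nhds_unique (hu g ⟨c₀, hb⟩) (tendsto_atTop_iSup ?_)
  intro d d' h
  exact QE_cut_mono hQ hx hb h

include hQ hx hu in
lemma QE_cut_le {g : X → EReal} {c₀ : ℝ} (hb : ∀ x, (c₀ : EReal) ≤ g x) (d : ℝ) :
    QE (fun x => min (g x) (d : EReal)) ≤ QE g := by
  rw [QE_eq_iSup hQ hx hu hb]
  exact le_iSup (fun d : ℝ => QE (fun x => min (g x) (d : EReal))) d

include hQ hx hu in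
lemma QE_mono {f g : X → EReal} {c₁ c₂ : ℝ} (hbf : ∀ x, (c₁ : EReal) ≤ f x)
    (hbg : ∀ x, (c₂ : EReal) ≤ g x) (h : ∀ x, f x ≤ g x) : QE f ≤ QE g := by
  rw [QE_eq_iSup hQ hx hu hbf, QE_eq_iSup hQ hx hu hbg]
  refine iSup_mono fun d => ?_
  rw [QE_cut hx hbf d, QE_cut hx hbg d, EReal.coe_le_coe_iff]
  refine Q_mono hQ fun x => ?_
  exact EReal.toReal_le_toReal (min_le_min (h x) le_rfl) (cut_ne_bot hbf d x) (cut_ne_top g d x)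

include hQ hx in
lemma QE_const (r : ℝ) : QE (fun _ : X => (r : EReal)) = (r : EReal) := by
  have := hx (fun _ => r)
  rwa [Q_const hQ] at this

include hQ hx hu in
lemma QE_le_const {g : X → EReal} {c₁ r : ℝ} (hb : ∀ x, (c₁ : EReal) ≤ g x)
    (h : ∀ x, g x ≤ (r : EReal)) : QE g ≤ (r : EReal) := by
  have := QE_mono hQ hx hu hb (fun _ : X => le_rfl (a := (r:EReal))) h
  rwa [QE_const hQ hx] at this

include hQ hx hu in
lemma QE_ge_min {g : X → EReal} {c₀ : ℝ} (hb : ∀ x, (c₀ : EReal) ≤ g x) :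
    ∃ x₀, g x₀ ≤ QE g := by
  obtain ⟨x₀, hx₀⟩ := Finite.exists_min g
  refine ⟨x₀, ?_⟩
  rw [QE_eq_iSup hQ hx hu hb]
  have key : ∀ d : ℝ, min (g x₀) (d : EReal) ≤ QE (fun x => min (g x) (d : EReal)) := by
    intro d
    rw [QE_cut hx hb d]
    have h1 : (min (g x₀) (d : EReal)).toReal ≤ Q (rcut g d) := by
      refine le_Q_of_forall_le hQ fun x => ?_
      exact EReal.toReal_le_toReal (min_le_min (hx₀ x) le_rfl)
        (cut_ne_bot hb d x₀) (cut_ne_top g d x)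
    calc min (g x₀) (d : EReal) = (((min (g x₀) (d:EReal)).toReal : ℝ) : EReal) :=
          (EReal.coe_toReal (cut_ne_top g d x₀) (cut_ne_bot hb d x₀)).symm
      _ ≤ _ := EReal.coe_le_coe_iff.2 h1
  calc g x₀ = ⨆ d : ℝ, min (g x₀) (d : EReal) :=
        (ereal_iSup_min_coe _ (((EReal.bot_lt_coe c₀).trans_le (hb x₀)).ne')).symm
    _ ≤ _ := iSup_mono key

include hQ hx hu in
lemma le_QE_of_forall {g : X → EReal} {c₀ m : ℝ} (hb : ∀ x, (c₀ : EReal) ≤ g x)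
    (h : ∀ x, (m : EReal) ≤ g x) : (m : EReal) ≤ QE g := by
  obtain ⟨x₀, h₀⟩ := QE_ge_min hQ hx hu hb
  exact (h x₀).trans h₀

include hQ hx hu in
lemma QE_add_le {g₁ g₂ : X → EReal} {c₁ c₂ : ℝ} (hb1 : ∀ x, (c₁ : EReal) ≤ g₁ x)
    (hb2 : ∀ x, (c₂ : EReal) ≤ g₂ x) :
    QE (fun x => g₁ x + g₂ x) ≤ QE g₁ + QE g₂ := by
  set c₀ : ℝ := min c₁ c₂ with hc₀
  have hb1' : ∀ x, (c₀ : EReal) ≤ g₁ x :=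
    fun x => (EReal.coe_le_coe_iff.2 (min_le_left _ _)).trans (hb1 x)
  have hb2' : ∀ x, (c₀ : EReal) ≤ g₂ x :=
    fun x => (EReal.coe_le_coe_iff.2 (min_le_right _ _)).trans (hb2 x)
  have hbsum : ∀ x, ((c₀ + c₀ : ℝ) : EReal) ≤ g₁ x + g₂ x := fun x => by
    rw [EReal.coe_add]; exact add_le_add (hb1' x) (hb2' x)
  rw [QE_eq_iSup hQ hx hu hbsum]
  refine iSup_le fun d => ?_
  set e : ℝ := max (d - c₀) c₀ with he
  have hec : c₀ ≤ e := le_max_right _ _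
  have hed : d ≤ e + c₀ := by
    have : d - c₀ ≤ e := le_max_left _ _
    linarith
  have hpt : ∀ x, min (g₁ x + g₂ x) (d : EReal) ≤
      min (g₁ x) (e : EReal) + min (g₂ x) (e : EReal) := by
    intro x
    by_cases h1 : g₁ x ≤ (e : EReal)
    · by_cases h2 : g₂ x ≤ (e : EReal)
      · rw [min_eq_left h1, min_eq_left h2]
        exact min_le_left _ _
      · push_neg at h2
        rw [min_eq_right h2.le]
        refine (min_le_right _ _).trans ?_
        calc (d : EReal) ≤ ((e + c₀ : ℝ) : EReal) := EReal.coe_le_coe_iff.2 hed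
          _ = (c₀ : EReal) + (e : EReal) := by rw [add_comm]; exact (EReal.coe_add _ _)
          _ ≤ _ := add_le_add (le_min (hb1' x) (EReal.coe_le_coe_iff.2 hec)) le_rfl
    · push_neg at h1
      rw [min_eq_right h1.le]
      refine (min_le_right _ _).trans ?_
      calc (d : EReal) ≤ ((e + c₀ : ℝ) : EReal) := EReal.coe_le_coe_iff.2 hed
        _ = (e : EReal) + (c₀ : EReal) := EReal.coe_add _ _
        _ ≤ _ := add_le_add le_rfl (le_min (hb2' x) (EReal.coe_le_coe_iff.2 hec))
  have hbmin : ∀ x, ((min c₀ e + min c₀ e : ℝ) : EReal) ≤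
      min (g₁ x) (e : EReal) + min (g₂ x) (e : EReal) := by
    intro x
    rw [EReal.coe_add]
    exact add_le_add (le_min ((EReal.coe_le_coe_iff.2 (min_le_left _ _)).trans (hb1' x))
        (EReal.coe_le_coe_iff.2 (min_le_right _ _)))
      (le_min ((EReal.coe_le_coe_iff.2 (min_le_left _ _)).trans (hb2' x))
        (EReal.coe_le_coe_iff.2 (min_le_right _ _)))
  have step1 : QE (fun x => min (g₁ x + g₂ x) (d : EReal)) ≤
      QE (fun x => min (g₁ x) (e : EReal) + min (g₂ x) (e : EReal)) :=
    QE_mono hQ hx hu (bb_cut hbsum d) hbmin hpt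
  have hfe : (fun x => min (g₁ x) (e : EReal) + min (g₂ x) (e : EReal)) =
      (fun x => (((rcut g₁ e x + rcut g₂ e x : ℝ)) : EReal)) := by
    funext x
    rw [EReal.coe_add]
    rw [congrFun (cut_coe hb1' e) x, congrFun (cut_coe hb2' e) x]
  have step2 : QE (fun x => min (g₁ x) (e : EReal) + min (g₂ x) (e : EReal)) ≤
      QE (fun x => min (g₁ x) (e : EReal)) + QE (fun x => min (g₂ x) (e : EReal)) := by
    rw [hfe, hx _, QE_cut hx hb1' e, QE_cut hx hb2' e]
    rw [← EReal.coe_add, EReal.coe_le_coe_iff]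
    exact hQ.2.1 _ _
  refine step1.trans (step2.trans ?_)
  exact add_le_add (QE_cut_le hQ hx hu hb1' e) (QE_cut_le hQ hx hu hb2' e)

include hQ hx hu in
lemma QE_add_const_le {g : X → EReal} {c₁ : ℝ} (hb : ∀ x, (c₁ : EReal) ≤ g x) (r : ℝ) :
    QE (fun x => g x + (r : EReal)) ≤ QE g + (r : EReal) := by
  have h := QE_add_le hQ hx hu (g₂ := fun _ => (r : EReal)) hb (fun _ => le_rfl (a := (r:EReal)))
  rwa [QE_const hQ hx] at h

include hQ hx hu in
lemma QE_smul_le {g : X → EReal} {c₀ γ : ℝ} (hγ : 0 < γ) (hb : ∀ x, (c₀ : EReal) ≤ g x) :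
    QE (fun x => (γ : EReal) * g x) ≤ (γ : EReal) * QE g := by
  have hγ' : (0 : EReal) ≤ (γ : EReal) := by exact_mod_cast hγ.le
  have hbγ : ∀ x, ((γ * c₀ : ℝ) : EReal) ≤ (γ : EReal) * g x := fun x => by
    rw [EReal.coe_mul]
    exact mul_le_mul_of_nonneg_left (hb x) hγ'
  rw [QE_eq_iSup hQ hx hu hbγ]
  refine iSup_le fun d => ?_
  have hpt : (fun x => min ((γ : EReal) * g x) (d : EReal)) =
      (fun x => (γ : EReal) * min (g x) ((d / γ : ℝ) : EReal)) := by
    funext x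
    have hgx : g x ≠ ⊥ := ((EReal.bot_lt_coe c₀).trans_le (hb x)).ne'
    cases hgx' : g x with
    | bot => exact absurd hgx' hgx
    | top =>
      rw [EReal.coe_mul_top_of_pos hγ]
      have : min (⊤:EReal) ((d / γ : ℝ) : EReal) = ((d / γ : ℝ) : EReal) := min_eq_right le_top
      rw [this, min_eq_right le_top, ← EReal.coe_mul, mul_div_cancel₀ d hγ.ne']
    | coe v =>
      have h1 : min ((γ:EReal) * (v:EReal)) (d:EReal) = ((min (γ*v) d : ℝ) : EReal) := by
        rw [← EReal.coe_mul]
        exact ((EReal.coe_strictMono.monotone).map_min).symm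
      have h2 : min ((v:EReal)) ((d/γ : ℝ):EReal) = ((min v (d/γ) : ℝ) : EReal) :=
        ((EReal.coe_strictMono.monotone).map_min).symm
      rw [h1, h2, ← EReal.coe_mul, EReal.coe_eq_coe_iff]
      rw [(monotone_mul_left_of_nonneg hγ.le).map_min]
      rw [mul_div_cancel₀ d hγ.ne']
  rw [hpt]
  have hfe : (fun x => (γ : EReal) * min (g x) ((d / γ : ℝ) : EReal)) =
      (fun x => (((γ * rcut g (d/γ) x : ℝ)) : EReal)) := by
    funext x
    rw [EReal.coe_mul, congrFun (cut_coe hb (d/γ)) x]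
  rw [hfe, hx _, hQ.2.2 γ hγ.le, EReal.coe_mul]
  refine mul_le_mul_of_nonneg_left ?_ hγ'
  rw [← QE_cut hx hb (d/γ)]
  exact QE_cut_le hQ hx hu hb (d/γ)

include hQ hx hu in
lemma QE_iSup_le {g : ℕ → X → EReal} {c₀ : ℝ} (hmono : ∀ m x, g m x ≤ g (m+1) x)
    (hb : ∀ m x, (c₀ : EReal) ≤ g m x) :
    QE (fun x => ⨆ m, g m x) ≤ ⨆ m, QE (g m) := by
  have gm : ∀ {m m'}, m ≤ m' → ∀ x, g m x ≤ g m' x := by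
    intro m m' h
    induction h with
    | refl => exact fun x => le_rfl
    | step h ih => exact fun x => (ih x).trans (hmono _ x)
  set G := fun x => ⨆ m, g m x with hG
  have hbG : ∀ x, (c₀ : EReal) ≤ G x := fun x => (hb 0 x).trans (le_iSup (g · x) 0)
  rw [QE_eq_iSup hQ hx hu hbG]
  refine iSup_le fun d => ?_
  refine ereal_le_add_of_forall_pos fun δ hδ => ?_
  have hch : ∀ x, ∃ m, rcut G d x - δ ≤ rcut (g m) d x := by
    intro x
    set r : ℝ := rcut G d x with hr0
    have hr : ((r : ℝ) : EReal) = min (G x) (d : EReal) := congrFun (cut_coe hbG d) x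
    have h1 : ((r - δ : ℝ) : EReal) < G x := by
      calc ((r - δ : ℝ) : EReal) < (r : EReal) := EReal.coe_lt_coe_iff.2 (by linarith)
        _ = min (G x) (d:EReal) := hr
        _ ≤ G x := min_le_left _ _
    rw [hG, lt_iSup_iff] at h1
    obtain ⟨m, hm⟩ := h1
    refine ⟨m, ?_⟩
    have hrd : r ≤ d := by
      have : ((r:ℝ):EReal) ≤ (d:EReal) := hr ▸ min_le_right _ _
      exact EReal.coe_le_coe_iff.1 this
    have h2 : ((r - δ : ℝ) : EReal) ≤ min (g m x) (d : EReal) :=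
      le_min hm.le (EReal.coe_le_coe_iff.2 (by linarith))
    show r - δ ≤ (min (g m x) (d : EReal)).toReal
    calc r - δ = ((r - δ : ℝ) : EReal).toReal := (EReal.toReal_coe _).symm
      _ ≤ _ := EReal.toReal_le_toReal h2 (EReal.coe_ne_bot _) (cut_ne_top (g m) d x)
  choose mfun hmfun using hch
  set m₀ : ℕ := Finset.univ.sup mfun with hm₀
  have hall : ∀ x, rcut G d x ≤ rcut (g m₀) d x + δ := by
    intro x
    have h2 : rcut (g (mfun x)) d x ≤ rcut (g m₀) d x :=
      EReal.toReal_le_toReal (min_le_min (gm (Finset.le_sup (Finset.mem_univ x)) x) le_rfl)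
        (cut_ne_bot (hb _) d x) (cut_ne_top (g m₀) d x)
    have h1 := hmfun x
    linarith
  have hQle : Q (rcut G d) ≤ Q (rcut (g m₀) d) + δ :=
    (Q_mono hQ hall).trans (Q_add_const hQ _ δ)
  calc QE (fun x => min (G x) (d:EReal)) = ((Q (rcut G d) : ℝ) : EReal) := QE_cut hx hbG d
    _ ≤ ((Q (rcut (g m₀) d) + δ : ℝ) : EReal) := EReal.coe_le_coe_iff.2 hQle
    _ = ((Q (rcut (g m₀) d) : ℝ) : EReal) + (δ : EReal) := EReal.coe_add _ _
    _ ≤ QE (g m₀) + (δ : EReal) := by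
        refine add_le_add ?_ le_rfl
        rw [← QE_cut hx (hb m₀) d]
        exact QE_cut_le hQ hx hu (hb m₀) d
    _ ≤ (⨆ m, QE (g m)) + (δ : EReal) :=
        add_le_add (le_iSup (fun m => QE (g m)) m₀) le_rfl

end Stage2

section Stage3
variable {X : Type*} [Fintype X] [Nonempty X]

/-! ### pref / cyl helpers -/

lemma pref_length (ω : ℕ → X) (n : ℕ) : (pref ω n).length = n := by simp [pref]

lemma pref_succ (ω : ℕ → X) (n : ℕ) : pref ω (n+1) = pref ω n ++ [ω n] := by
  rw [pref, List.ofFn_succ']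
  simp [pref, List.concat_eq_append]

lemma pref_prefix (ω : ℕ → X) {n m : ℕ} (h : n ≤ m) : pref ω n <+: pref ω m := by
  induction h with
  | refl => exact List.prefix_refl _
  | step h ih =>
    rename_i m' _
    exact ih.trans (by rw [pref_succ]; exact List.prefix_append _ _)

lemma pref_take (ω : ℕ → X) {n m : ℕ} (h : n ≤ m) : (pref ω m).take n = pref ω n := by
  have := List.prefix_iff_eq_take.1 (pref_prefix ω h)
  rw [pref_length] at this
  exact this.symm

lemma pref_of_prefix {ω : ℕ → X} {l : List X} {m : ℕ} (h : l <+: pref ω m) :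
    pref ω l.length = l := by
  have hlen : l.length ≤ m := by
    have := h.length_le; rwa [pref_length] at this
  have h1 := List.prefix_iff_eq_take.1 h
  rw [← pref_take ω hlen]
  exact h1.symm

lemma mem_cyl {ω : ℕ → X} {l : List X} : ω ∈ cyl l ↔ pref ω l.length = l := Iff.rfl

lemma cyl_mono {t u : List X} (h : t <+: u) : cyl u ⊆ cyl t := by
  intro ω hω
  rw [mem_cyl] at hω ⊢
  have : t <+: pref ω u.length := by rw [hω]; exact h
  exact pref_of_prefix this

lemma mem_cyl_pref {ω : ℕ → X} {l : List X} {m : ℕ} (h : ω ∈ cyl l) (hm : l.length ≤ m) :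
    l <+: pref ω m := by
  rw [mem_cyl] at h
  rw [← h]
  exact pref_prefix ω hm

/-! ### the descent path -/

variable (Q : List X → (X → ℝ) → ℝ) (Qe : List X → (X → EReal) → EReal)
variable (hQ : ∀ s, IsCoherent (Q s)) (hQe : LocalExtension Q Qe)

section Descent

variable (M : List X → EReal)

/-- choose a child minimizing the supermartingale. -/
noncomputable def dstep (v : List X) : X :=
  Classical.choose (Finite.exists_min fun x => M (v ++ [x]))

lemma dstep_spec (v : List X) (x : X) : M (v ++ [dstep M v]) ≤ M (v ++ [x]) :=
  Classical.choose_spec (Finite.exists_min fun x => M (v ++ [x])) x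

/-- the descent path extension starting at `u`. -/
noncomputable def dext (u : List X) : ℕ → List X :=
  fun m => Nat.rec u (fun _ v => v ++ [dstep M v]) m

lemma dext_zero (u : List X) : dext M u 0 = u := rfl

lemma dext_succ (u : List X) (m : ℕ) :
    dext M u (m+1) = dext M u m ++ [dstep M (dext M u m)] := rfl

lemma dext_length (u : List X) (m : ℕ) : (dext M u m).length = u.length + m := by
  induction m with
  | zero => rfl
  | succ m ih => rw [dext_succ]; simp [ih]; ring

lemma dext_prefix (u : List X) {m m' : ℕ} (h : m ≤ m') : dext M u m <+: dext M u m' := by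
  induction h with
  | refl => exact List.prefix_refl _
  | step h ih => rename_i k _; exact ih.trans (by rw [dext_succ]; exact List.prefix_append _ _)

/-- the descent path. -/
noncomputable def dpath (u : List X) : ℕ → X := fun i => nthL (dext M u (i+1)) i

lemma dpath_pref (u : List X) (m : ℕ) : pref (dpath M u) (u.length + m) = dext M u m := by
  apply List.ext_getElem
  · rw [pref_length, dext_length]
  · intro i hi1 hi2
    have h1 : (pref (dpath M u) (u.length+m))[i] = dpath M u i := by simp [pref]
    rw [h1]
    show nthL (dext M u (i+1)) i = (dext M u m)[i]
    have hlen1 : i < (dext M u (i+1)).length := by rw [dext_length]; omega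
    simp only [nthL]
    rw [List.getD_eq_getElem _ _ hlen1]
    rcases le_total (i+1) m with h | h
    · exact (dext_prefix M u h).getElem hlen1
    · exact ((dext_prefix M u h).getElem hi2).symm

lemma dpath_mem_cyl (u : List X) : dpath M u ∈ cyl u := by
  rw [mem_cyl]
  have := dpath_pref M u 0
  simpa [dext_zero] using this

include hQ hQe in
lemma dext_mono (hbb : MBddBelow M) (hsm : IsSupermart Qe M) (u : List X) (m : ℕ) :
    M (dext M u (m+1)) ≤ M (dext M u m) := by
  obtain ⟨cM, hcM⟩ := hbb
  set v := dext M u m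
  obtain ⟨x₀, hx₀⟩ := QE_ge_min (hQ v) (hQe v).1 (hQe v).2.1
    (g := fun x => M (v ++ [x])) (c₀ := cM) (fun x => hcM _)
  calc M (v ++ [dstep M v]) ≤ M (v ++ [x₀]) := dstep_spec M v x₀
    _ ≤ Qe v (fun x => M (v ++ [x])) := hx₀
    _ ≤ M v := hsm v

include hQ hQe in
lemma dext_le (hbb : MBddBelow M) (hsm : IsSupermart Qe M) (u : List X) (m : ℕ) :
    M (dext M u m) ≤ M u := by
  induction m with
  | zero => exact le_rfl
  | succ m ih => exact (dext_mono Q Qe hQ hQe M hbb hsm u m).trans ih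

include hQ hQe in
lemma descent (hbb : MBddBelow M) (hsm : IsSupermart Qe M) (u : List X) :
    ∃ ω, ω ∈ cyl u ∧ liminf (fun n => M (pref ω n)) atTop ≤ M u := by
  refine ⟨dpath M u, dpath_mem_cyl M u, ?_⟩
  rw [liminf_eq_iSup_iInf_of_nat']
  refine iSup_le fun n => ?_
  refine iInf_le_of_le u.length ?_
  rw [dpath_pref M u n]
  exact dext_le Q Qe hQ hQe M hbb hsm u n

end Descent

/-! ### basic EV lemmas -/

include hQ hQe in
lemma witness_lb {f : (ℕ → X) → EReal} {c : ℝ} (hc : ∀ ω, (c : EReal) ≤ f ω)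
    {M : List X → EReal} (hbb : MBddBelow M) (hsm : IsSupermart Qe M) {t : List X}
    (hdom : ∀ ω ∈ cyl t, f ω ≤ liminf (fun n => M (pref ω n)) atTop)
    {u : List X} (htu : t <+: u) : (c : EReal) ≤ M u := by
  obtain ⟨ω, hω, hlim⟩ := descent Q Qe hQ hQe M hbb hsm u
  exact (hc ω).trans ((hdom ω (cyl_mono htu hω)).trans hlim)

include hQ hQe in
lemma EV_ge_const {f : (ℕ → X) → EReal} {c : ℝ} (hc : ∀ ω, (c : EReal) ≤ f ω) (t : List X) :
    (c : EReal) ≤ EV Qe f t := by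
  refine le_sInf fun y hy => ?_
  obtain ⟨M, hbb, hsm, hdom, rfl⟩ := hy
  exact witness_lb Q Qe hQ hQe hc hbb hsm hdom (List.prefix_refl t)

lemma EV_mono {f g : (ℕ → X) → EReal} (h : ∀ ω, f ω ≤ g ω) (t : List X) :
    EV Qe f t ≤ EV Qe g t := by
  refine sInf_le_sInf fun y hy => ?_
  obtain ⟨M, hbb, hsm, hdom, rfl⟩ := hy
  exact ⟨M, hbb, hsm, fun ω hω => (h ω).trans (hdom ω hω), rfl⟩

include hQ hQe in
lemma EV_supermart {f : (ℕ → X) → EReal} {c : ℝ} (hc : ∀ ω, (c : EReal) ≤ f ω) (t : List X) :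
    Qe t (fun x => EV Qe f (t ++ [x])) ≤ EV Qe f t := by
  refine le_sInf fun y hy => ?_
  obtain ⟨M, hbb, hsm, hdom, rfl⟩ := hy
  obtain ⟨cM, hcM⟩ := hbb
  have hpt : ∀ x, EV Qe f (t ++ [x]) ≤ M (t ++ [x]) := by
    intro x
    refine sInf_le ⟨M, ⟨cM, hcM⟩, hsm, ?_, rfl⟩
    intro ω hω
    exact hdom ω (cyl_mono (List.prefix_append t [x]) hω)
  calc Qe t (fun x => EV Qe f (t ++ [x])) ≤ Qe t (fun x => M (t ++ [x])) :=
        QE_mono (hQ t) (hQe t).1 (hQe t).2.1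
          (fun x => EV_ge_const Q Qe hQ hQe hc _) (fun x => hcM _) hpt
    _ ≤ M t := hsm t

end Stage3

section Stage4
variable {X : Type*} [Fintype X] [Nonempty X]

/-! ### list helpers for the machine -/

lemma ne_concat_of_prefix {s t : List X} (h : s <+: t) (x : X) : s ≠ t ++ [x] := by
  intro he
  have h1 : s.length ≤ t.length := h.length_le
  have h2 : s.length = t.length + 1 := by rw [he]; simp
  omega

lemma prefix_concat_cases {s t : List X} {x : X} (h : s <+: t ++ [x]) :
    s <+: t ∨ s = t ++ [x] := by
  rcases le_or_gt s.length t.length with hle | hlt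
  · left
    have h1 := List.prefix_iff_eq_take.1 h
    rw [List.take_append_of_le_length hle] at h1
    rw [h1]
    exact List.take_prefix _ _
  · right
    refine h.eq_of_length ?_
    have := h.length_le
    simp only [List.length_append, List.length_singleton] at this ⊢
    omega

lemma prefix_snoc_helper {s t : List X} (h : s <+: t) (hne : s ≠ t) (hn : t ≠ []) :
    s <+: t.dropLast := by
  have hlen : s.length ≤ t.length - 1 := by
    have h1 := h.length_le
    have h2 : s.length ≠ t.length := fun he => hne (h.eq_of_length he)
    have h3 : 0 < t.length := List.length_pos_iff.2 hn
    omega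
  have h1 := List.prefix_iff_eq_take.1 h
  rw [List.prefix_iff_eq_take, List.dropLast_eq_take, List.take_take,
    min_eq_left hlen]
  exact h1

/-- an induction principle for situations extending `s`. -/
lemma ext_induction {s : List X} (P : List X → Prop) (base : P s)
    (step : ∀ t x, s <+: t → P t → P (t ++ [x])) : ∀ t, s <+: t → P t := by
  have key : ∀ n t, t.length = n → s <+: t → P t := by
    intro n
    induction n using Nat.strong_induction_on with
    | _ n ih =>
      intro t hlen hst
      by_cases he : s = t
      · rw [← he]; exact base
      · have hne : t ≠ [] := by
          rintro rfl
          exact he (List.prefix_nil.mp hst)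
        obtain ⟨l, x, hlx⟩ : ∃ l x, t = l ++ [x] :=
          ⟨t.dropLast, t.getLast hne, (List.dropLast_append_getLast hne).symm⟩
        have hsl : s <+: l := by
          have := prefix_snoc_helper hst he hne
          rwa [hlx, List.dropLast_concat] at this
        have hllen : l.length < n := by
          rw [← hlen, hlx]; simp
        rw [hlx]
        exact step l x hsl (ih l.length hllen l rfl hsl)
  exact fun t => key t.length t rfl

/-! ### the doubling machine -/

variable (Q : List X → (X → ℝ) → ℝ) (Qe : List X → (X → EReal) → EReal)

/-- the machine state: number of completed cycles, and the current holding node. -/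
noncomputable def mst (s : List X) (PP : List X → EReal) (Wit : List X → List X → EReal)
    (a b : ℝ) (t : List X) : ℕ × Option (List X) :=
  if h : s <+: t ∧ s ≠ t then
    (match mst s PP Wit a b t.dropLast with
     | (k, none) => if PP t < (a : EReal) then (k, some t) else (k, none)
     | (k, some u) => if (b : EReal) < Wit u t then (k + 1, none) else (k, some u))
  else if s = t then (if PP s < (a : EReal) then (0, some s) else (0, none))
  else (0, none)
termination_by t.length
decreasing_by
  have hne : t ≠ [] := by
    rintro rfl
    exact h.2 (List.prefix_nil.mp h.1)
  have := List.length_pos_iff.2 hne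
  simp only [List.length_dropLast]
  omega

/-- the machine capital process. -/
noncomputable def mval (s : List X) (PP : List X → EReal) (Wit : List X → List X → EReal)
    (a b : ℝ) (t : List X) : EReal :=
  match mst s PP Wit a b t with
  | (k, none) => (((k : ℝ) * (b - a) + a : ℝ) : EReal)
  | (k, some u) => (((k : ℝ) * (b - a) + (a - (Wit u u).toReal) : ℝ) : EReal) + Wit u t

section MachineLemmas

variable (hQ : ∀ s, IsCoherent (Q s)) (hQe : LocalExtension Q Qe)
variable {s : List X} {PP : List X → EReal} {Wit : List X → List X → EReal}
variable {F : (ℕ → X) → EReal} {c a b : ℝ}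
variable (hca : c < a) (hab : a < b)
variable (HW : ∀ t, s <+: t → PP t < (a : EReal) →
  MBddBelow (Wit t) ∧ IsSupermart Qe (Wit t) ∧ Wit t t < (a : EReal) ∧
  (∀ u, t <+: u → (c : EReal) ≤ Wit t u) ∧
  (∀ ω ∈ cyl t, F ω ≤ liminf (fun n => Wit t (pref ω n)) atTop))

lemma mst_outside {t : List X} (h : ¬ s <+: t) : mst s PP Wit a b t = (0, none) := by
  rw [mst]
  rw [dif_neg (fun hh => h hh.1), if_neg (fun he : s = t => h (he ▸ List.prefix_refl s))]

lemma mst_self : mst s PP Wit a b s =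
    (if PP s < (a : EReal) then (0, some s) else (0, none)) := by
  rw [mst]
  rw [dif_neg (fun hh => hh.2 rfl), if_pos rfl]

lemma mst_concat {t : List X} (ht : s <+: t) (x : X) :
    mst s PP Wit a b (t ++ [x]) =
    (match mst s PP Wit a b t with
     | (k, none) => if PP (t ++ [x]) < (a : EReal) then (k, some (t ++ [x])) else (k, none)
     | (k, some u) => if (b : EReal) < Wit u (t ++ [x]) then (k + 1, none) else (k, some u)) := by
  rw [mst]
  rw [dif_pos ⟨ht.trans (List.prefix_append t [x]), ne_concat_of_prefix ht x⟩,
    List.dropLast_concat]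


lemma mst_concat_none {t : List X} (ht : s <+: t) (x : X) {k : ℕ}
    (hm : mst s PP Wit a b t = (k, none)) :
    mst s PP Wit a b (t ++ [x]) =
      if PP (t ++ [x]) < (a : EReal) then (k, some (t ++ [x])) else (k, none) := by
  rw [mst_concat ht x, hm]

lemma mst_concat_some {t u : List X} (ht : s <+: t) (x : X) {k : ℕ}
    (hm : mst s PP Wit a b t = (k, some u)) :
    mst s PP Wit a b (t ++ [x]) =
      if (b : EReal) < Wit u (t ++ [x]) then (k + 1, none) else (k, some u) := by
  rw [mst_concat ht x, hm]

lemma mval_eq_none {t : List X} {k : ℕ} (hm : mst s PP Wit a b t = (k, none)) :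
    mval s PP Wit a b t = (((k : ℝ) * (b - a) + a : ℝ) : EReal) := by
  rw [mval, hm]

lemma mval_eq_some {t u : List X} {k : ℕ} (hm : mst s PP Wit a b t = (k, some u)) :
    mval s PP Wit a b t =
      (((k : ℝ) * (b - a) + (a - (Wit u u).toReal) : ℝ) : EReal) + Wit u t := by
  rw [mval, hm]

include HW in
lemma mst_inv : ∀ t, s <+: t → ∀ k u, mst s PP Wit a b t = (k, some u) →
    s <+: u ∧ u <+: t ∧ PP u < (a : EReal) := by
  refine ext_induction _ ?_ ?_
  · intro k u h
    rw [mst_self] at h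
    by_cases hd : PP s < (a : EReal)
    · rw [if_pos hd, Prod.mk.injEq] at h
      obtain ⟨-, h2⟩ := h
      obtain rfl := Option.some.inj h2
      exact ⟨List.prefix_refl s, List.prefix_refl s, hd⟩
    · rw [if_neg hd, Prod.mk.injEq] at h
      exact absurd h.2 (by simp)
  · intro t x hst IH k u h
    rcases hm : mst s PP Wit a b t with ⟨k', o⟩
    cases o with
    | none =>
      rw [mst_concat_none hst x hm] at h
      by_cases hd : PP (t ++ [x]) < (a : EReal)
      · rw [if_pos hd, Prod.mk.injEq] at h
        obtain ⟨-, h2⟩ := h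
        obtain rfl := Option.some.inj h2
        exact ⟨hst.trans (List.prefix_append t [x]), List.prefix_refl _, hd⟩
      · rw [if_neg hd, Prod.mk.injEq] at h
        exact absurd h.2 (by simp)
    | some u' =>
      rw [mst_concat_some hst x hm] at h
      by_cases hsell : (b : EReal) < Wit u' (t ++ [x])
      · rw [if_pos hsell, Prod.mk.injEq] at h
        exact absurd h.2 (by simp)
      · rw [if_neg hsell, Prod.mk.injEq] at h
        obtain ⟨-, h2⟩ := h
        obtain rfl := Option.some.inj h2
        obtain ⟨h1, h2, h3⟩ := IH k' u' hm
        exact ⟨h1, h2.trans (List.prefix_append t [x]), h3⟩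

include HW hca hab in
lemma wit_real {u : List X} (hsu : s <+: u) (hd : PP u < (a : EReal)) :
    Wit u u = ((Wit u u).toReal : EReal) ∧ c ≤ (Wit u u).toReal ∧ (Wit u u).toReal < a := by
  obtain ⟨_, _, hua, hlb, _⟩ := HW u hsu hd
  have hcu : (c : EReal) ≤ Wit u u := hlb u (List.prefix_refl u)
  have hne_bot : Wit u u ≠ ⊥ := ((EReal.bot_lt_coe c).trans_le hcu).ne'
  have hne_top : Wit u u ≠ ⊤ := (hua.trans (EReal.coe_lt_top a)).ne
  have hcoe := EReal.coe_toReal hne_top hne_bot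
  refine ⟨hcoe.symm, ?_, ?_⟩
  · have : (c : EReal) ≤ ((Wit u u).toReal : EReal) := hcoe.symm ▸ hcu
    exact EReal.coe_le_coe_iff.1 this
  · have : ((Wit u u).toReal : EReal) < (a : EReal) := hcoe ▸ hua
    exact EReal.coe_lt_coe_iff.1 this

include HW hca hab in
lemma mval_lb : ∀ t, (c : EReal) ≤ mval s PP Wit a b t := by
  intro t
  by_cases hst : s <+: t
  · rcases hm : mst s PP Wit a b t with ⟨k, o⟩
    cases o with
    | none =>
      rw [mval_eq_none hm]
      refine EReal.coe_le_coe_iff.2 ?_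
      nlinarith [Nat.cast_nonneg (α := ℝ) k]
    | some u =>
      obtain ⟨hsu, hut, hd⟩ := mst_inv Qe HW t hst k u hm
      obtain ⟨hcoe, hcw, hwa⟩ := wit_real Qe hca hab HW hsu hd
      rw [mval_eq_some hm]
      have hcash : (0:ℝ) ≤ (k:ℝ) * (b - a) + (a - (Wit u u).toReal) := by
        nlinarith [Nat.cast_nonneg (α := ℝ) k]
      obtain ⟨_, _, _, hlb, _⟩ := HW u hsu hd
      calc (c : EReal) = ((0:ℝ) : EReal) + (c : EReal) := by norm_num
        _ ≤ _ := add_le_add (EReal.coe_le_coe_iff.2 hcash) (hlb t hut)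
  · rw [mval_eq_none (mst_outside hst)]
    refine EReal.coe_le_coe_iff.2 ?_
    norm_num
    linarith

include HW hca hab in
lemma mval_self : mval s PP Wit a b s ≤ (a : EReal) := by
  by_cases hd : PP s < (a : EReal)
  · have hm : mst s PP Wit a b s = (0, some s) := by rw [mst_self, if_pos hd]
    rw [mval_eq_some hm]
    obtain ⟨hcoe, hcw, hwa⟩ := wit_real Qe hca hab HW (List.prefix_refl s) hd
    rw [hcoe, ← EReal.coe_add, EReal.coe_le_coe_iff]
    norm_num
  · have hm : mst s PP Wit a b s = (0, none) := by rw [mst_self, if_neg hd]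
    rw [mval_eq_none hm]
    refine EReal.coe_le_coe_iff.2 ?_
    norm_num

lemma mval_outside {t : List X} (h : ¬ s <+: t) : mval s PP Wit a b t = (a : EReal) := by
  rw [mval_eq_none (mst_outside h)]
  norm_num

end MachineLemmas
end Stage4

section Stage5
variable {X : Type*} [Fintype X] [Nonempty X]
variable (Q : List X → (X → ℝ) → ℝ) (Qe : List X → (X → EReal) → EReal)
variable (hQ : ∀ s, IsCoherent (Q s)) (hQe : LocalExtension Q Qe)
variable {s : List X} {PP : List X → EReal} {Wit : List X → List X → EReal}
variable {F : (ℕ → X) → EReal} {c a b : ℝ}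
variable (hca : c < a) (hab : a < b)
variable (HW : ∀ t, s <+: t → PP t < (a : EReal) →
  MBddBelow (Wit t) ∧ IsSupermart Qe (Wit t) ∧ Wit t t < (a : EReal) ∧
  (∀ u, t <+: u → (c : EReal) ≤ Wit t u) ∧
  (∀ ω ∈ cyl t, F ω ≤ liminf (fun n => Wit t (pref ω n)) atTop))

include hQ hQe hca hab HW in
lemma mval_supermart : IsSupermart Qe (mval s PP Wit a b) := by
  intro t
  by_cases hst : s <+: t
  · rcases hm : mst s PP Wit a b t with ⟨k, o⟩
    cases o with
    | none =>
      have hch : ∀ x, mval s PP Wit a b (t ++ [x]) = (((k:ℝ) * (b - a) + a : ℝ) : EReal) := by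
        intro x
        by_cases hd : PP (t ++ [x]) < (a : EReal)
        · have hm' : mst s PP Wit a b (t ++ [x]) = (k, some (t ++ [x])) := by
            rw [mst_concat_none hst x hm, if_pos hd]
          rw [mval_eq_some hm']
          obtain ⟨hcoe, hcw, hwa⟩ :=
            wit_real Qe hca hab HW (hst.trans (List.prefix_append t [x])) hd
          set W := Wit (t ++ [x]) (t ++ [x]) with hWdef
          set w' := W.toReal with hw'
          rw [hcoe, ← EReal.coe_add, EReal.coe_eq_coe_iff]
          ring
        · have hm' : mst s PP Wit a b (t ++ [x]) = (k, none) := by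
            rw [mst_concat_none hst x hm, if_neg hd]
          rw [mval_eq_none hm']
      have hfun : (fun x => mval s PP Wit a b (t ++ [x])) =
          (fun _ : X => (((k:ℝ) * (b - a) + a : ℝ) : EReal)) := funext hch
      rw [hfun, QE_const (hQ t) (hQe t).1, mval_eq_none hm]
    | some u =>
      obtain ⟨hsu, hut, hd⟩ := mst_inv Qe HW t hst k u hm
      obtain ⟨hbbW, hsmW, hWua, hWlb, hWdom⟩ := HW u hsu hd
      obtain ⟨hcoe, hcw, hwa⟩ := wit_real Qe hca hab HW hsu hd
      set w : ℝ := (Wit u u).toReal with hw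
      set cash : ℝ := (k:ℝ) * (b - a) + (a - w) with hcash
      have hch : ∀ x, mval s PP Wit a b (t ++ [x]) ≤ (cash : EReal) + Wit u (t ++ [x]) := by
        intro x
        by_cases hsell : (b : EReal) < Wit u (t ++ [x])
        · have hm' : mst s PP Wit a b (t ++ [x]) = (k + 1, none) := by
            rw [mst_concat_some hst x hm, if_pos hsell]
          rw [mval_eq_none hm']
          calc ((((k+1:ℕ):ℝ) * (b - a) + a : ℝ) : EReal) ≤ ((cash + b : ℝ) : EReal) := by
                refine EReal.coe_le_coe_iff.2 ?_
                push_cast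
                rw [hcash]
                nlinarith
            _ = (cash : EReal) + (b : EReal) := EReal.coe_add _ _
            _ ≤ (cash : EReal) + Wit u (t ++ [x]) := add_le_add le_rfl hsell.le
        · have hm' : mst s PP Wit a b (t ++ [x]) = (k, some u) := by
            rw [mst_concat_some hst x hm, if_neg hsell]
          rw [mval_eq_some hm']
      have hlb1 : ∀ x, (c : EReal) ≤ mval s PP Wit a b (t ++ [x]) :=
        fun x => mval_lb Qe hca hab HW _
      have hWlb' : ∀ x, (c : EReal) ≤ Wit u (t ++ [x]) :=
        fun x => hWlb _ (hut.trans (List.prefix_append t [x]))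
      have hlb2 : ∀ x, ((cash + c : ℝ) : EReal) ≤ (cash : EReal) + Wit u (t ++ [x]) := by
        intro x
        rw [EReal.coe_add]
        exact add_le_add le_rfl (hWlb' x)
      calc Qe t (fun x => mval s PP Wit a b (t ++ [x]))
          ≤ Qe t (fun x => (cash : EReal) + Wit u (t ++ [x])) :=
            QE_mono (hQ t) (hQe t).1 (hQe t).2.1 hlb1 hlb2 hch
        _ = Qe t (fun x => Wit u (t ++ [x]) + (cash : EReal)) := by
            congr 1; funext x; rw [add_comm]
        _ ≤ Qe t (fun x => Wit u (t ++ [x])) + (cash : EReal) :=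
            QE_add_const_le (hQ t) (hQe t).1 (hQe t).2.1 hWlb' cash
        _ ≤ Wit u t + (cash : EReal) := add_le_add (hsmW t) le_rfl
        _ = (cash : EReal) + Wit u t := add_comm _ _
        _ = mval s PP Wit a b t := (mval_eq_some hm).symm
  · have hch : ∀ x, mval s PP Wit a b (t ++ [x]) ≤ (a : EReal) := by
      intro x
      by_cases h2 : s <+: t ++ [x]
      · rcases prefix_concat_cases h2 with h3 | h3
        · exact absurd h3 hst
        · rw [← h3]; exact mval_self Qe hca hab HW
      · rw [mval_outside h2]
    have hlb : ∀ x, (c : EReal) ≤ mval s PP Wit a b (t ++ [x]) :=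
      fun x => mval_lb Qe hca hab HW _
    rw [mval_outside hst]
    exact QE_le_const (hQ t) (hQe t).1 (hQe t).2.1 hlb hch

include hca hab HW in
lemma mval_diverge {ω : ℕ → X} (hω : ω ∈ cyl s)
    (hdip : ∀ n : ℕ, ∃ m, n ≤ m ∧ s.length ≤ m ∧ PP (pref ω m) < (a : EReal))
    (hF : (b : EReal) < F ω) (r : ℝ) :
    ∃ n₀, ∀ m, n₀ ≤ m → (r : EReal) ≤ mval s PP Wit a b (pref ω m) := by
  have hpath : ∀ m, s.length ≤ m → s <+: pref ω m := fun m hm => mem_cyl_pref hω hm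
  set K : ℕ → ℕ := fun m => (mst s PP Wit a b (pref ω m)).1 with hK
  have hstep_none : ∀ m, s.length ≤ m → ∀ k, mst s PP Wit a b (pref ω m) = (k, none) →
      mst s PP Wit a b (pref ω (m+1)) =
        (if PP (pref ω (m+1)) < (a : EReal) then (k, some (pref ω (m+1))) else (k, none)) := by
    intro m hm k hk
    rw [pref_succ ω m]
    rw [mst_concat_none (hpath m hm) (ω m) hk]
  have hstep_some : ∀ m, s.length ≤ m → ∀ k u, mst s PP Wit a b (pref ω m) = (k, some u) →
      mst s PP Wit a b (pref ω (m+1)) =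
        (if (b : EReal) < Wit u (pref ω (m+1)) then (k + 1, none) else (k, some u)) := by
    intro m hm k u hk
    rw [pref_succ ω m]
    rw [mst_concat_some (hpath m hm) (ω m) hk]
  have hKstep : ∀ m, s.length ≤ m → K m ≤ K (m+1) := by
    intro m hm
    rcases hm2 : mst s PP Wit a b (pref ω m) with ⟨k, o⟩
    have hKm : K m = k := by simp only [hK]; rw [hm2]
    cases o with
    | none =>
      have h1 := hstep_none m hm k hm2
      by_cases hd : PP (pref ω (m+1)) < (a : EReal)
      · rw [if_pos hd] at h1
        have : K (m+1) = k := by simp only [hK]; rw [h1]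
        omega
      · rw [if_neg hd] at h1
        have : K (m+1) = k := by simp only [hK]; rw [h1]
        omega
    | some u =>
      have h1 := hstep_some m hm k u hm2
      by_cases hsell : (b : EReal) < Wit u (pref ω (m+1))
      · rw [if_pos hsell] at h1
        have : K (m+1) = k + 1 := by simp only [hK]; rw [h1]
        omega
      · rw [if_neg hsell] at h1
        have : K (m+1) = k := by simp only [hK]; rw [h1]
        omega
  have hKmono : ∀ m m', s.length ≤ m → m ≤ m' → K m ≤ K m' := by
    intro m m' hm hmm
    induction hmm with
    | refl => exact le_rfl
    | @step m'' h'' ih => exact ih.trans (hKstep m'' (hm.trans h''))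
  have hKub : ∀ k₀ : ℕ, ∃ n, s.length ≤ n ∧ k₀ ≤ K n := by
    intro k₀
    induction k₀ with
    | zero => exact ⟨s.length, le_rfl, Nat.zero_le _⟩
    | succ k₀ IH =>
      obtain ⟨n, hn, hkn⟩ := IH
      by_contra hcon
      push_neg at hcon
      have hconst : ∀ m, n ≤ m → K m = k₀ := by
        intro m hm
        have h1 := hcon m (hn.trans hm)
        have h2 := hkn.trans (hKmono n m hn hm)
        omega
      have hC : ∃ m₂, n ≤ m₂ ∧ ∃ u, mst s PP Wit a b (pref ω m₂) = (k₀, some u) := by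
        rcases ho : (mst s PP Wit a b (pref ω n)).2 with _ | u
        case some =>
          refine ⟨n, le_rfl, u, ?_⟩
          have he : mst s PP Wit a b (pref ω n) =
              ((mst s PP Wit a b (pref ω n)).1, (mst s PP Wit a b (pref ω n)).2) := rfl
          rw [he, ho]
          have : (mst s PP Wit a b (pref ω n)).1 = k₀ := hconst n le_rfl
          rw [this]
        case none =>
          obtain ⟨m₁, hm₁n, hm₁s, hm₁dip⟩ := hdip (n+1)
          have hstateN : mst s PP Wit a b (pref ω n) = (k₀, none) := by
            have he : mst s PP Wit a b (pref ω n) =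
                ((mst s PP Wit a b (pref ω n)).1, (mst s PP Wit a b (pref ω n)).2) := rfl
            rw [he, ho]
            have : (mst s PP Wit a b (pref ω n)).1 = k₀ := hconst n le_rfl
            rw [this]
          have main : ∀ j, n ≤ j → j ≤ m₁ →
              (∃ m₂, n ≤ m₂ ∧ m₂ ≤ j ∧ ∃ u, mst s PP Wit a b (pref ω m₂) = (k₀, some u)) ∨
              mst s PP Wit a b (pref ω j) = (k₀, none) := by
            intro j
            induction j with
            | zero =>
              intro h0 _
              right
              have : n = 0 := Nat.le_zero.mp h0
              rw [← this]
              exact hstateN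
            | succ j IHj =>
              intro hnj hjm
              rcases Nat.lt_or_ge n (j+1) with hlt | hge
              · have hnj' : n ≤ j := Nat.lt_succ_iff.mp hlt
                rcases IHj hnj' ((Nat.le_succ j).trans hjm) with hdone | hnone
                · left
                  obtain ⟨m₂, h1, h2, hu⟩ := hdone
                  exact ⟨m₂, h1, h2.trans (Nat.le_succ j), hu⟩
                · have hsj : s.length ≤ j := hn.trans hnj'
                  by_cases hd : PP (pref ω (j+1)) < (a : EReal)
                  · left
                    exact ⟨j+1, hnj'.trans (Nat.le_succ j), le_rfl, pref ω (j+1),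
                      by rw [hstep_none j hsj k₀ hnone, if_pos hd]⟩
                  · right
                    rw [hstep_none j hsj k₀ hnone, if_neg hd]
              · have : n = j + 1 := le_antisymm hnj hge
                right
                rw [← this]
                exact hstateN
          rcases main m₁ ((Nat.le_succ n).trans hm₁n) le_rfl with hdone | hnone
          · obtain ⟨m₂, h1, _, hu⟩ := hdone
            exact ⟨m₂, h1, hu⟩
          · obtain ⟨j, rfl⟩ : ∃ j, m₁ = j + 1 := ⟨m₁ - 1, by omega⟩
            have hsj : s.length ≤ j := by omega
            rcases hmj : mst s PP Wit a b (pref ω j) with ⟨k', o'⟩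
            cases o' with
            | none =>
              have h5 := hstep_none j hsj k' hmj
              rw [if_pos hm₁dip] at h5
              rw [h5, Prod.mk.injEq] at hnone
              exact absurd hnone.2 (by simp)
            | some u' =>
              have h5 := hstep_some j hsj k' u' hmj
              by_cases hsell : (b : EReal) < Wit u' (pref ω (j+1))
              · rw [if_pos hsell] at h5
                have h6 : K (j+1) = k' + 1 := by simp only [hK]; rw [h5]
                have h7 : K j = k' := by simp only [hK]; rw [hmj]
                have h8 := hconst j (by omega)
                have h9 := hconst (j+1) (by omega)
                omega
              · rw [if_neg hsell] at h5
                rw [h5, Prod.mk.injEq] at hnone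
                exact absurd hnone.2 (by simp)
      obtain ⟨m₂, hm₂n, u, hm₂⟩ := hC
      have hsm₂ : s <+: pref ω m₂ := hpath m₂ (hn.trans hm₂n)
      obtain ⟨hsu, hupref, hud⟩ := mst_inv Qe HW _ hsm₂ k₀ u hm₂
      obtain ⟨hbbW, hsmW, hWua, hWlb, hWdom⟩ := HW u hsu hud
      have hωu : ω ∈ cyl u := by rw [mem_cyl]; exact pref_of_prefix hupref
      have hdel := hWdom ω hωu
      have hlive : ∃ n₂, ∀ i, (b : EReal) < Wit u (pref ω (i + n₂)) := by
        have hlt : (b : EReal) < liminf (fun n => Wit u (pref ω n)) atTop :=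
          lt_of_lt_of_le hF hdel
        rw [liminf_eq_iSup_iInf_of_nat'] at hlt
        rw [lt_iSup_iff] at hlt
        obtain ⟨n₂, hn₂⟩ := hlt
        exact ⟨n₂, fun i => lt_of_lt_of_le hn₂ (iInf_le _ i)⟩
      obtain ⟨n₂, hn₂⟩ := hlive
      have hpers : ∀ d, mst s PP Wit a b (pref ω (m₂ + d)) = (k₀, some u) := by
        intro d
        induction d with
        | zero => exact hm₂
        | succ d IHd =>
          have hsd : s.length ≤ m₂ + d := le_trans (hn.trans hm₂n) (Nat.le_add_right _ _)
          have hst2 := hstep_some (m₂+d) hsd k₀ u IHd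
          by_cases hsell : (b : EReal) < Wit u (pref ω (m₂+d+1))
          · rw [if_pos hsell] at hst2
            have h1 : K (m₂+d+1) = k₀+1 := by simp only [hK]; rw [hst2]
            have h2 := hconst (m₂+d+1) (by omega)
            omega
          · rw [if_neg hsell] at hst2
            exact hst2
      have hsell := hn₂ (m₂ + 1)
      have hidx : m₂ + 1 + n₂ = m₂ + n₂ + 1 := by omega
      rw [hidx] at hsell
      have hst3 := hstep_some (m₂ + n₂) (le_trans (hn.trans hm₂n) (Nat.le_add_right _ _))
        k₀ u (hpers n₂)
      rw [if_pos hsell] at hst3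
      have h1 : K (m₂+n₂+1) = k₀+1 := by simp only [hK]; rw [hst3]
      have h2 := hconst (m₂+n₂+1) (by omega)
      omega
  have hbound : ∀ m, s.length ≤ m →
      ((min a c + (K m : ℝ) * (b - a) : ℝ) : EReal) ≤ mval s PP Wit a b (pref ω m) := by
    intro m hm
    rcases hm2 : mst s PP Wit a b (pref ω m) with ⟨k, o⟩
    have hKm : K m = k := by simp only [hK]; rw [hm2]
    rw [hKm]
    cases o with
    | none =>
      rw [mval_eq_none hm2]
      refine EReal.coe_le_coe_iff.2 ?_
      have : min a c ≤ a := min_le_left _ _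
      linarith
    | some u =>
      obtain ⟨hsu, hupref, hud⟩ := mst_inv Qe HW _ (hpath m hm) k u hm2
      obtain ⟨hcoe, hcw, hwa⟩ := wit_real Qe hca hab HW hsu hud
      obtain ⟨_, _, _, hWlb, _⟩ := HW u hsu hud
      rw [mval_eq_some hm2]
      calc ((min a c + (k:ℝ) * (b - a) : ℝ) : EReal)
          ≤ (((k:ℝ) * (b - a) + (a - (Wit u u).toReal) + c : ℝ) : EReal) := by
            refine EReal.coe_le_coe_iff.2 ?_
            have : min a c ≤ c := min_le_right _ _
            linarith
        _ = (((k:ℝ) * (b - a) + (a - (Wit u u).toReal) : ℝ) : EReal) + (c : EReal) :=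
            EReal.coe_add _ _
        _ ≤ _ := add_le_add le_rfl (hWlb _ hupref)
  obtain ⟨k₀, hk₀⟩ := exists_nat_ge ((r - min a c) / (b - a))
  have hba : (0:ℝ) < b - a := by linarith
  have hk₀' : r ≤ min a c + (k₀:ℝ) * (b - a) := by
    rw [div_le_iff₀ hba] at hk₀
    linarith
  obtain ⟨n, hns, hkn⟩ := hKub k₀
  refine ⟨n, fun m hm => ?_⟩
  have h1 := hbound m (hns.trans hm)
  have h2 : k₀ ≤ K m := hkn.trans (hKmono n m hns hm)
  refine le_trans ?_ h1
  refine EReal.coe_le_coe_iff.2 ?_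
  have h3 : (k₀:ℝ) * (b - a) ≤ (K m : ℝ) * (b - a) :=
    mul_le_mul_of_nonneg_right (Nat.cast_le.2 h2) hba.le
  linarith

end Stage5

section Stage6
variable {X : Type*} [Fintype X] [Nonempty X]

lemma ereal_add_iSup {a : EReal} (f : ℕ → EReal) (ha : a ≠ ⊥) :
    a + ⨆ m, f m = ⨆ m, (a + f m) := by
  refine le_antisymm ?_ (iSup_le fun m => add_le_add_right (le_iSup f m) a)
  cases a with
  | bot => exact absurd rfl ha
  | top =>
    rcases eq_or_ne (⨆ m, f m) ⊥ with hS | hS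
    · rw [hS]
      simp
    · obtain ⟨m, hm⟩ : ∃ m, f m ≠ ⊥ := by
        by_contra hall
        push_neg at hall
        exact hS (by simp [iSup_eq_bot, hall])
      have h2 : (⊤ : EReal) + f m = ⊤ := EReal.top_add_of_ne_bot hm
      calc (⊤:EReal) + ⨆ m, f m ≤ ⊤ := le_top
        _ = ⊤ + f m := h2.symm
        _ ≤ ⨆ m, ((⊤:EReal) + f m) := le_iSup (fun m => (⊤:EReal) + f m) m
  | coe r =>
    cases hS : (⨆ m, f m) with
    | bot =>
      rw [EReal.add_bot]
      exact bot_le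
    | top =>
      refine le_of_eq (ereal_top_le fun t => ?_).symm
      have h1 : ((t - r : ℝ) : EReal) < ⨆ m, f m := by rw [hS]; exact EReal.coe_lt_top _
      rw [lt_iSup_iff] at h1
      obtain ⟨m, hm⟩ := h1
      calc (t : EReal) = ((r + (t - r) : ℝ) : EReal) := by norm_num
        _ = (r : EReal) + ((t - r : ℝ) : EReal) := EReal.coe_add _ _
        _ ≤ (r : EReal) + f m := add_le_add le_rfl hm.le
        _ ≤ ⨆ m, ((r:EReal) + f m) := le_iSup (fun m => (r:EReal) + f m) m
    | coe v =>
      refine ereal_le_add_of_forall_pos fun δ hδ => ?_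
      have h1 : ((v - δ : ℝ) : EReal) < ⨆ m, f m := by
        rw [hS]; exact EReal.coe_lt_coe_iff.2 (by linarith)
      rw [lt_iSup_iff] at h1
      obtain ⟨m, hm⟩ := h1
      calc (r : EReal) + ((v : ℝ) : EReal) = ((r + v : ℝ) : EReal) := (EReal.coe_add _ _).symm
        _ = ((r + (v - δ) : ℝ) : EReal) + (δ : EReal) := by
            rw [← EReal.coe_add, EReal.coe_eq_coe_iff]; ring
        _ = ((r : EReal) + ((v - δ : ℝ) : EReal)) + (δ : EReal) := by rw [EReal.coe_add]
        _ ≤ ((r : EReal) + f m) + (δ : EReal) :=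
            add_le_add (add_le_add le_rfl hm.le) le_rfl
        _ ≤ (⨆ m, ((r:EReal) + f m)) + (δ : EReal) :=
            add_le_add (le_iSup (fun m => (r:EReal) + f m) m) le_rfl

lemma ereal_sum_le_coe {m : ℕ} {f : ℕ → EReal} {g : ℕ → ℝ} (h : ∀ n, f n ≤ (g n : EReal)) :
    ∑ n ∈ Finset.range m, f n ≤ ((∑ n ∈ Finset.range m, g n : ℝ) : EReal) := by
  induction m with
  | zero => simp
  | succ m ih =>
    rw [Finset.sum_range_succ, Finset.sum_range_succ, EReal.coe_add]
    exact add_le_add ih (h m)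

variable (Q : List X → (X → ℝ) → ℝ) (Qe : List X → (X → EReal) → EReal)
variable (hQ : ∀ s, IsCoherent (Q s)) (hQe : LocalExtension Q Qe)

lemma EV_lt_witness {f : (ℕ → X) → EReal} {t : List X} {a : EReal}
    (hlt : EV Qe f t < a) : ∃ M : List X → EReal, MBddBelow M ∧ IsSupermart Qe M ∧
      (∀ ω ∈ cyl t, f ω ≤ liminf (fun n => M (pref ω n)) atTop) ∧ M t < a := by
  obtain ⟨y, hy, hya⟩ := sInf_lt_iff.1 hlt
  obtain ⟨M, hbb, hsm, hdom, rfl⟩ := hy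
  exact ⟨M, hbb, hsm, hdom, hya⟩

section Scaled
variable {c γ : ℝ} (hγ : 0 < γ) {V : List X → EReal}

lemma shift_nonneg (hVlb : ∀ t, (c : EReal) ≤ V t) (t : List X) :
    (0 : EReal) ≤ V t + ((-c : ℝ) : EReal) := by
  calc (0 : EReal) = ((c + -c : ℝ) : EReal) := by norm_num
    _ = (c : EReal) + ((-c : ℝ) : EReal) := EReal.coe_add _ _
    _ ≤ _ := add_le_add (hVlb t) le_rfl

include hγ in
lemma scaled_nonneg (hVlb : ∀ t, (c : EReal) ≤ V t) (t : List X) :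
    (0 : EReal) ≤ (γ : EReal) * (V t + ((-c : ℝ) : EReal)) := by
  have h0 : (γ : EReal) * 0 = 0 := mul_zero _
  rw [← h0]
  exact mul_le_mul_of_nonneg_left (shift_nonneg hVlb t) (by exact_mod_cast hγ.le)

include hQ hQe hγ in
lemma scaled_supermart (hVlb : ∀ t, (c : EReal) ≤ V t) (hVsm : IsSupermart Qe V) :
    IsSupermart Qe (fun t => (γ : EReal) * (V t + ((-c : ℝ) : EReal))) := by
  intro t
  have hb : ∀ x, ((c + -c : ℝ) : EReal) ≤ V (t ++ [x]) + ((-c : ℝ) : EReal) := by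
    intro x
    rw [EReal.coe_add]
    exact add_le_add (hVlb _) le_rfl
  calc Qe t (fun x => (γ : EReal) * (V (t ++ [x]) + ((-c : ℝ) : EReal)))
      ≤ (γ : EReal) * Qe t (fun x => V (t ++ [x]) + ((-c : ℝ) : EReal)) :=
        QE_smul_le (hQ t) (hQe t).1 (hQe t).2.1 hγ hb
    _ ≤ (γ : EReal) * (Qe t (fun x => V (t ++ [x])) + ((-c : ℝ) : EReal)) :=
        mul_le_mul_of_nonneg_left
          (QE_add_const_le (hQ t) (hQe t).1 (hQe t).2.1 (fun x => hVlb _) (-c))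
          (by exact_mod_cast hγ.le)
    _ ≤ (γ : EReal) * (V t + ((-c : ℝ) : EReal)) :=
        mul_le_mul_of_nonneg_left (add_le_add (hVsm t) le_rfl) (by exact_mod_cast hγ.le)

include hγ in
lemma scaled_start {s : List X} {a : ℝ} (hVs : V s ≤ (a : EReal)) :
    (γ : EReal) * (V s + ((-c : ℝ) : EReal)) ≤ ((γ * (a - c) : ℝ) : EReal) := by
  calc (γ : EReal) * (V s + ((-c : ℝ) : EReal))
      ≤ (γ : EReal) * ((a : EReal) + ((-c : ℝ) : EReal)) :=
        mul_le_mul_of_nonneg_left (add_le_add hVs le_rfl) (by exact_mod_cast hγ.le)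
    _ = ((γ * (a - c) : ℝ) : EReal) := by
        rw [← EReal.coe_add, ← EReal.coe_mul, EReal.coe_eq_coe_iff]; ring

include hγ in
lemma scaled_diverge {ω : ℕ → X}
    (hdiv : ∀ r : ℝ, ∃ n₀, ∀ m, n₀ ≤ m → (r : EReal) ≤ V (pref ω m)) :
    ∀ r : ℝ, ∃ n₀, ∀ m, n₀ ≤ m →
      (r : EReal) ≤ (γ : EReal) * (V (pref ω m) + ((-c : ℝ) : EReal)) := by
  intro r
  obtain ⟨n₀, hn₀⟩ := hdiv (r / γ + c)
  refine ⟨n₀, fun m hm => ?_⟩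
  have h1 : ((r / γ : ℝ) : EReal) ≤ V (pref ω m) + ((-c : ℝ) : EReal) := by
    calc ((r / γ : ℝ) : EReal) = ((r / γ + c + -c : ℝ) : EReal) := by norm_num
      _ = ((r / γ + c : ℝ) : EReal) + ((-c : ℝ) : EReal) := EReal.coe_add _ _
      _ ≤ _ := add_le_add (hn₀ m hm) le_rfl
  calc (r : EReal) = ((γ * (r / γ) : ℝ) : EReal) := by
        rw [mul_div_cancel₀ r hγ.ne']
    _ = (γ : EReal) * ((r / γ : ℝ) : EReal) := EReal.coe_mul _ _
    _ ≤ _ := mul_le_mul_of_nonneg_left h1 (by exact_mod_cast hγ.le)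

end Scaled
end Stage6

section Stage7
variable {X : Type*} [Fintype X] [Nonempty X]
variable (Q : List X → (X → ℝ) → ℝ) (Qe : List X → (X → EReal) → EReal)
variable (hQ : ∀ s, IsCoherent (Q s)) (hQe : LocalExtension Q Qe)

include hQ hQe in
lemma EV_fatou_key (s : List X) (fs : ℕ → (ℕ → X) → EReal) {c : ℝ}
    (hc : ∀ n ω, (c : EReal) ≤ fs n ω) (φ : ℕ → ℕ) (hφ : StrictMono φ)
    {α ε : ℝ} (hε : 0 < ε) (hα : ∀ j, EV Qe (fs (φ j)) s < (α : EReal)) :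
    EV Qe (fun ω => liminf (fun n => fs n ω) atTop) s ≤ ((α + ε : ℝ) : EReal) := by
  classical
  set hs : ℕ → (ℕ → X) → EReal := fun j ω => ⨅ k, fs (φ (j + k)) ω with hhs
  have hch : ∀ j ω, (c : EReal) ≤ hs j ω := fun j ω => le_iInf fun k => hc _ ω
  have hmono : ∀ j ω, hs j ω ≤ hs (j+1) ω := by
    intro j ω
    simp only [hhs]
    refine le_iInf fun k => ?_
    have he : j + 1 + k = j + (k + 1) := by omega
    rw [he]
    exact iInf_le _ (k+1)
  have hjfs : ∀ j ω, hs j ω ≤ fs (φ j) ω := by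
    intro j ω
    simp only [hhs]
    have he : φ j = φ (j + 0) := by norm_num
    rw [he]
    exact iInf_le _ 0
  set Pp : ℕ → List X → EReal := fun j t => EV Qe (hs j) t with hPp
  have hPc : ∀ j t, (c : EReal) ≤ Pp j t := fun j t => EV_ge_const Q Qe hQ hQe (hch j) t
  have hPm : ∀ j t, Pp j t ≤ Pp (j+1) t := fun j t => EV_mono Qe (hmono j) t
  have hPsm : ∀ j t, Qe t (fun x => Pp j (t ++ [x])) ≤ Pp j t :=
    fun j t => EV_supermart Q Qe hQ hQe (hch j) t
  have hPα : ∀ j, Pp j s < (α : EReal) :=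
    fun j => lt_of_le_of_lt (EV_mono Qe (hjfs j) s) (hα j)
  set uP : List X → EReal := fun t => ⨆ j, Pp j t with huP
  have huc : ∀ t, (c : EReal) ≤ uP t := fun t => (hPc 0 t).trans (le_iSup (fun j => Pp j t) 0)
  have husm : IsSupermart Qe uP := by
    intro t
    have h1 : Qe t (fun x => ⨆ j, Pp j (t ++ [x])) ≤ ⨆ j, Qe t (fun x => Pp j (t ++ [x])) :=
      QE_iSup_le (hQ t) (hQe t).1 (hQe t).2.1 (g := fun j x => Pp j (t ++ [x]))
        (fun j x => hPm j _) (fun j x => hPc j _)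
    exact h1.trans (iSup_mono fun j => hPsm j t)
  -- witness selector
  have hsel : ∀ j : ℕ, ∀ q : ℚ, ∀ t : List X, ∃ M : List X → EReal,
      Pp j t < (((q:ℝ)) : EReal) → (MBddBelow M ∧ IsSupermart Qe M ∧
        (∀ ω ∈ cyl t, hs j ω ≤ liminf (fun n => M (pref ω n)) atTop) ∧
        M t < (((q:ℝ)) : EReal)) := by
    intro j q t
    by_cases hd : Pp j t < (((q:ℝ)) : EReal)
    · obtain ⟨M, h1, h2, h3, h4⟩ := EV_lt_witness Qe hd
      exact ⟨M, fun _ => ⟨h1, h2, h3, h4⟩⟩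
    · exact ⟨fun _ => ⊤, fun hcon => absurd hcon hd⟩
  choose W hW using hsel
  have hHW : ∀ (j : ℕ) (qa : ℚ), c < (qa:ℝ) →
      ∀ t, s <+: t → Pp j t < (((qa:ℝ)) : EReal) →
      MBddBelow (W j qa t) ∧ IsSupermart Qe (W j qa t) ∧ W j qa t t < (((qa:ℝ)) : EReal) ∧
      (∀ u, t <+: u → (c : EReal) ≤ W j qa t u) ∧
      (∀ ω ∈ cyl t, hs j ω ≤ liminf (fun n => W j qa t (pref ω n)) atTop) := by
    intro j qa hcqa t hst hd
    obtain ⟨h1, h2, h3, h4⟩ := hW j qa t hd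
    exact ⟨h1, h2, h4, fun u htu => witness_lb Q Qe hQ hQe (hch j) h1 h2 h3 htu, h3⟩
  -- the correction processes
  have hDD : ∀ n : ℕ, ∃ D : List X → EReal,
      IsSupermart Qe D ∧ (∀ t, (0:EReal) ≤ D t) ∧
      (D s ≤ ((ε * (1/2)^(n+1) : ℝ) : EReal)) ∧
      (∀ (j : ℕ) (qa qb : ℚ), Encodable.encode (j, qa, qb) = n →
        c < (qa:ℝ) → (qa:ℝ) < (qb:ℝ) →
        ∀ ω, ω ∈ cyl s →
        (∀ n' : ℕ, ∃ m, n' ≤ m ∧ s.length ≤ m ∧ Pp j (pref ω m) < (((qa:ℝ)) : EReal)) →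
        ((((qb:ℝ)) : EReal) < hs j ω) →
        ∀ r : ℝ, ∃ n₀, ∀ m, n₀ ≤ m → (r : EReal) ≤ D (pref ω m)) := by
    intro n
    have hzero : IsSupermart Qe (fun _ : List X => (0:EReal)) := by
      intro t
      have h0 : ((fun _ : X => (0:EReal))) = (fun _ : X => (((0:ℝ)):EReal)) := by
        funext x; rw [EReal.coe_zero]
      calc Qe t (fun _ => (0:EReal)) = ((0:ℝ):EReal) := by rw [h0, QE_const (hQ t) (hQe t).1]
        _ = (0:EReal) := EReal.coe_zero
        _ ≤ 0 := le_rfl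
    have hgeo0 : (0:ℝ) ≤ ε * (1/2)^(n+1) := by positivity
    rcases hdec : (Encodable.decode n : Option (ℕ × ℚ × ℚ)) with _ | i
    · refine ⟨fun _ => 0, hzero, fun t => le_rfl, by show (0:EReal) ≤ _; exact_mod_cast hgeo0, ?_⟩
      intro j' qa' qb' henc
      exfalso
      have hk := Encodable.encodek (j', qa', qb')
      rw [henc, hdec] at hk
      cases hk
    · obtain ⟨j, qa, qb⟩ := i
      by_cases hv : c < (qa:ℝ) ∧ (qa:ℝ) < (qb:ℝ)
      · set γ : ℝ := ε * (1/2)^(n+1) / ((qa:ℝ) - c) with hγdef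
        have hγ : 0 < γ := by
          refine div_pos (by positivity) ?_
          linarith [hv.1]
        have HWi := hHW j qa hv.1
        refine ⟨fun t => (γ : EReal) *
          (mval s (Pp j) (W j qa) (qa:ℝ) (qb:ℝ) t + ((-c : ℝ) : EReal)), ?_, ?_, ?_, ?_⟩
        · exact scaled_supermart Q Qe hQ hQe hγ
            (fun t => mval_lb Qe hv.1 hv.2 HWi t)
            (mval_supermart Q Qe hQ hQe hv.1 hv.2 HWi)
        · exact fun t => scaled_nonneg hγ (fun t' => mval_lb Qe hv.1 hv.2 HWi t') t
        · refine (scaled_start hγ (mval_self Qe hv.1 hv.2 HWi)).trans ?_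
          refine EReal.coe_le_coe_iff.2 ?_
          rw [hγdef, div_mul_cancel₀]
          linarith [hv.1]
        · intro j' qa' qb' henc h1 h2 ω hω hdip hesc r
          have hk := Encodable.encodek (j', qa', qb')
          rw [henc, hdec] at hk
          have hk2 : (j, qa, qb) = (j', qa', qb') := Option.some_inj.1 hk
          rw [Prod.mk.injEq, Prod.mk.injEq] at hk2
          obtain ⟨rfl, rfl, rfl⟩ := hk2
          exact scaled_diverge hγ
            (fun r' => mval_diverge Qe hv.1 hv.2 HWi hω hdip hesc r') r
      · refine ⟨fun _ => 0, hzero, fun t => le_rfl, by show (0:EReal) ≤ _; exact_mod_cast hgeo0, ?_⟩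
        intro j' qa' qb' henc h1 h2
        exfalso
        have hk := Encodable.encodek (j', qa', qb')
        rw [henc, hdec] at hk
        have hk2 : (j, qa, qb) = (j', qa', qb') := Option.some_inj.1 hk
        rw [Prod.mk.injEq, Prod.mk.injEq] at hk2
        obtain ⟨rfl, rfl, rfl⟩ := hk2
        exact hv ⟨h1, h2⟩
  choose DD hDDsm hDDpos hDDs hDDdiv using hDD
  set Tt : ℕ → List X → EReal := fun m t => ∑ n ∈ Finset.range m, DD n t with hTt
  have hT0 : ∀ t, Tt 0 t = 0 := by intro t; simp [hTt]
  have hTsucc : ∀ m t, Tt (m+1) t = Tt m t + DD m t := by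
    intro m t; simp only [hTt]; rw [Finset.sum_range_succ]
  have hTpos : ∀ m t, (0:EReal) ≤ Tt m t := by
    intro m t; simp only [hTt]
    exact Finset.sum_nonneg fun n _ => hDDpos n t
  have hTmono : ∀ m t, Tt m t ≤ Tt (m+1) t := by
    intro m t
    rw [hTsucc]
    exact le_add_of_nonneg_right (hDDpos m t)
  set Nn : List X → EReal := fun t => uP t + ⨆ m, Tt m t with hNn
  have hsupTpos : ∀ t, (0:EReal) ≤ ⨆ m, Tt m t :=
    fun t => (hTpos 0 t).trans (le_iSup (fun m => Tt m t) 0)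
  have hNc : ∀ t, (c:EReal) ≤ Nn t :=
    fun t => (huc t).trans (le_add_of_nonneg_right (hsupTpos t))
  have hNuP : ∀ t, uP t ≤ Nn t := fun t => le_add_of_nonneg_right (hsupTpos t)
  have hTsm : ∀ m t, Qe t (fun x => uP (t ++ [x]) + Tt m (t ++ [x])) ≤ uP t + Tt m t := by
    intro m
    induction m with
    | zero =>
      intro t
      have he : (fun x => uP (t++[x]) + Tt 0 (t++[x])) = fun x => uP (t++[x]) := by
        funext x; rw [hT0, add_zero]
      rw [he, hT0, add_zero]
      exact husm t
    | succ m IH =>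
      intro t
      have he : (fun x => uP (t++[x]) + Tt (m+1) (t++[x])) =
          fun x => (uP (t++[x]) + Tt m (t++[x])) + DD m (t++[x]) := by
        funext x
        rw [hTsucc, add_assoc]
      rw [he]
      have hb1 : ∀ x, (c:EReal) ≤ uP (t++[x]) + Tt m (t++[x]) :=
        fun x => (huc _).trans (le_add_of_nonneg_right (hTpos m _))
      calc Qe t (fun x => (uP (t++[x]) + Tt m (t++[x])) + DD m (t++[x]))
          ≤ Qe t (fun x => uP (t++[x]) + Tt m (t++[x])) + Qe t (fun x => DD m (t++[x])) :=
            QE_add_le (hQ t) (hQe t).1 (hQe t).2.1 hb1 (fun x => hDDpos m _)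
        _ ≤ (uP t + Tt m t) + DD m t := add_le_add (IH t) (hDDsm m t)
        _ = uP t + Tt (m+1) t := by rw [hTsucc, add_assoc]
  have hNsm : IsSupermart Qe Nn := by
    intro t
    have hne : ∀ t' : List X, uP t' ≠ ⊥ := fun t' => ((EReal.bot_lt_coe c).trans_le (huc t')).ne'
    have he : (fun x => Nn (t ++ [x])) = fun x => ⨆ m, (uP (t++[x]) + Tt m (t++[x])) := by
      funext x
      simp only [hNn]
      exact ereal_add_iSup (fun m => Tt m (t++[x])) (hne _)
    calc Qe t (fun x => Nn (t ++ [x]))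
        = Qe t (fun x => ⨆ m, (uP (t++[x]) + Tt m (t++[x]))) := by rw [he]
      _ ≤ ⨆ m, Qe t (fun x => uP (t++[x]) + Tt m (t++[x])) :=
          QE_iSup_le (hQ t) (hQe t).1 (hQe t).2.1
            (g := fun m x => uP (t++[x]) + Tt m (t++[x]))
            (fun m x => add_le_add le_rfl (hTmono m _))
            (fun m x => (huc _).trans (le_add_of_nonneg_right (hTpos m _)))
      _ ≤ ⨆ m, (uP t + Tt m t) := iSup_mono fun m => hTsm m t
      _ = uP t + ⨆ m, Tt m t := (ereal_add_iSup (fun m => Tt m t) (hne t)).symm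
      _ = Nn t := by simp only [hNn]
  have hNbb : MBddBelow Nn := ⟨c, hNc⟩
  -- start bound
  have hNs : Nn s ≤ ((α + ε : ℝ) : EReal) := by
    have h1 : uP s ≤ (α : EReal) := iSup_le fun j => (hPα j).le
    have h2 : ∀ m, Tt m s ≤ (ε : EReal) := by
      intro m
      simp only [hTt]
      refine (ereal_sum_le_coe (fun n => hDDs n)).trans ?_
      refine EReal.coe_le_coe_iff.2 ?_
      have h2' : ∑ n ∈ Finset.range m, ε * (1/2:ℝ)^(n+1)
          = ε * (1/2) * ∑ n ∈ Finset.range m, (1/2:ℝ)^n := by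
        rw [Finset.mul_sum]
        refine Finset.sum_congr rfl fun n _ => ?_
        ring
      rw [h2']
      have h3' := sum_geometric_two_le m
      have h4' : (0:ℝ) ≤ ∑ n ∈ Finset.range m, (1/2:ℝ)^n :=
        Finset.sum_nonneg fun i _ => by positivity
      nlinarith [hε.le]
    calc Nn s ≤ (α : EReal) + (ε : EReal) := add_le_add h1 (iSup_le h2)
      _ = ((α + ε : ℝ) : EReal) := (EReal.coe_add α ε).symm
  -- domination
  have hdom : ∀ ω ∈ cyl s, (⨆ j, hs j ω) ≤ liminf (fun n => Nn (pref ω n)) atTop := by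
    intro ω hω
    by_cases hgood : (⨆ j, hs j ω) ≤ liminf (fun n => uP (pref ω n)) atTop
    · refine hgood.trans ?_
      rw [liminf_eq_iSup_iInf_of_nat', liminf_eq_iSup_iInf_of_nat']
      exact iSup_mono fun n => iInf_mono fun i => hNuP _
    · push_neg at hgood
      rw [lt_iSup_iff] at hgood
      obtain ⟨j, hj⟩ := hgood
      have hPjle : liminf (fun n => Pp j (pref ω n)) atTop ≤
          liminf (fun n => uP (pref ω n)) atTop := by
        rw [liminf_eq_iSup_iInf_of_nat', liminf_eq_iSup_iInf_of_nat']
        exact iSup_mono fun n => iInf_mono fun i => le_iSup (fun j' => Pp j' _) j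
      have hLj : liminf (fun n => Pp j (pref ω n)) atTop < hs j ω := lt_of_le_of_lt hPjle hj
      have hcLj : (c:EReal) ≤ liminf (fun n => Pp j (pref ω n)) atTop := by
        rw [liminf_eq_iSup_iInf_of_nat']
        exact le_iSup_of_le 0 (le_iInf fun i => hPc j _)
      obtain ⟨x1, hx1a, hx1b⟩ := EReal.exists_between_coe_real hLj
      obtain ⟨x2, hx2a, hx2b⟩ := EReal.exists_between_coe_real hx1b
      obtain ⟨x3, hx3a, hx3b⟩ := EReal.exists_between_coe_real hx2b
      obtain ⟨qa, hqa1, hqa2⟩ := exists_rat_btwn (EReal.coe_lt_coe_iff.1 hx2a)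
      obtain ⟨qb, hqb1, hqb2⟩ := exists_rat_btwn (EReal.coe_lt_coe_iff.1 hx3a)
      have hcqa : c < (qa:ℝ) := by
        have hcx1 : (c:EReal) < (x1:EReal) := lt_of_le_of_lt hcLj hx1a
        have := EReal.coe_lt_coe_iff.1 hcx1
        linarith
      have hqaqb : (qa:ℝ) < (qb:ℝ) := by
        have h5 := EReal.coe_lt_coe_iff.1 hx3a
        linarith
      have hdip : ∀ n' : ℕ, ∃ m, n' ≤ m ∧ s.length ≤ m ∧
          Pp j (pref ω m) < (((qa:ℝ)) : EReal) := by
        intro n'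
        have h4 : liminf (fun n => Pp j (pref ω n)) atTop < (((qa:ℝ)) : EReal) :=
          lt_trans hx1a (EReal.coe_lt_coe_iff.2 hqa1)
        rw [liminf_eq_iSup_iInf_of_nat'] at h4
        have h5 : (⨅ i, Pp j (pref ω (i + max n' s.length))) < (((qa:ℝ)) : EReal) :=
          lt_of_le_of_lt (le_iSup (fun n'' => ⨅ i, Pp j (pref ω (i + n''))) (max n' s.length)) h4
        rw [iInf_lt_iff] at h5
        obtain ⟨i, hi⟩ := h5
        exact ⟨i + max n' s.length, by omega, by omega, hi⟩
      have hesc : (((qb:ℝ)) : EReal) < hs j ω :=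
        lt_of_lt_of_le (EReal.coe_lt_coe_iff.2 hqb2) hx3b.le
      have hdiv := hDDdiv (Encodable.encode (j, qa, qb)) j qa qb rfl hcqa hqaqb ω hω hdip hesc
      have htop : ∀ r : ℝ, (r : EReal) ≤ liminf (fun n => Nn (pref ω n)) atTop := by
        intro r
        obtain ⟨n₀, hn₀⟩ := hdiv (r - c)
        rw [liminf_eq_iSup_iInf_of_nat']
        refine le_iSup_of_le n₀ (le_iInf fun i => ?_)
        have hNgeD : ∀ t, (c:EReal) + DD (Encodable.encode (j, qa, qb)) t ≤ Nn t := by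
          intro t
          have h6 : DD (Encodable.encode (j, qa, qb)) t ≤ ⨆ m, Tt m t := by
            refine le_trans ?_ (le_iSup (fun m => Tt m t) (Encodable.encode (j, qa, qb) + 1))
            simp only [hTt]
            exact Finset.single_le_sum (f := fun n => DD n t) (fun n _ => hDDpos n t)
              (Finset.mem_range.2 (by omega))
          exact add_le_add (huc t) h6
        calc (r:EReal) = ((c + (r - c) : ℝ):EReal) := by norm_num
          _ = (c:EReal) + ((r - c : ℝ):EReal) := EReal.coe_add _ _
          _ ≤ (c:EReal) + DD (Encodable.encode (j, qa, qb)) (pref ω (i + n₀)) :=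
              add_le_add le_rfl (hn₀ _ (by omega))
          _ ≤ Nn (pref ω (i + n₀)) := hNgeD _
      have hliminftop : liminf (fun n => Nn (pref ω n)) atTop = ⊤ := ereal_top_le htop
      rw [hliminftop]
      exact le_top
  have hgH : ∀ ω, liminf (fun n => fs n ω) atTop ≤ ⨆ j, hs j ω := by
    intro ω
    rw [liminf_eq_iSup_iInf_of_nat']
    refine iSup_le fun n => le_iSup_of_le n (le_iInf fun k => ?_)
    have h7 : n + k ≤ φ (n + k) := hφ.id_le (n + k)
    have h8 : (φ (n + k) - n) + n = φ (n + k) := by omega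
    calc (⨅ i, fs (i + n) ω) ≤ fs ((φ (n+k) - n) + n) ω := iInf_le _ _
      _ = fs (φ (n + k)) ω := by rw [h8]
  have hEVH : EV Qe (fun ω => ⨆ j, hs j ω) s ≤ Nn s :=
    sInf_le ⟨Nn, hNbb, hNsm, hdom, rfl⟩
  exact le_trans (EV_mono Qe hgH s) (hEVH.trans hNs)

end Stage7

theorem stmt7 {X : Type*} [Fintype X] [Nonempty X]
    (Q : List X → (X → ℝ) → ℝ) (hQ : ∀ s, IsCoherent (Q s))
    (Qe : List X → (X → EReal) → EReal) (hQe : LocalExtension Q Qe)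
    (s : List X) (fs : ℕ → (ℕ → X) → EReal) (hfs : UnifBddBelow fs) :
    EV Qe (fun ω => liminf (fun n => fs n ω) atTop) s ≤
      liminf (fun n => EV Qe (fs n) s) atTop := by
  obtain ⟨c, hc⟩ := hfs
  have hc' : ∀ n ω, (c : EReal) ≤ fs n ω := hc
  by_contra hcon
  push_neg at hcon
  obtain ⟨r, hLr, hrE⟩ := EReal.exists_between_coe_real hcon
  obtain ⟨r', hLr', hr'r⟩ := EReal.exists_between_coe_real hLr
  have hfreq : ∀ n : ℕ, ∃ m, n ≤ m ∧ EV Qe (fs m) s < ((r' : ℝ) : EReal) := by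
    intro n
    have h1 : liminf (fun n => EV Qe (fs n) s) atTop < (r' : EReal) := hLr'
    rw [liminf_eq_iSup_iInf_of_nat'] at h1
    have h2 : (⨅ i, EV Qe (fs (i + n)) s) < (r' : EReal) :=
      lt_of_le_of_lt (le_iSup (fun n' => ⨅ i, EV Qe (fs (i + n')) s) n) h1
    rw [iInf_lt_iff] at h2
    obtain ⟨i, hi⟩ := h2
    exact ⟨i + n, by omega, hi⟩
  have hfreq' : ∃ᶠ n in atTop, EV Qe (fs n) s < ((r' : ℝ) : EReal) :=
    Filter.frequently_atTop.2 fun n => by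
      obtain ⟨m, hm1, hm2⟩ := hfreq n
      exact ⟨m, hm1, hm2⟩
  obtain ⟨φ, hφ, hφp⟩ := Filter.extraction_of_frequently_atTop hfreq'
  have hεpos : (0:ℝ) < r - r' := by
    have := EReal.coe_lt_coe_iff.1 hr'r
    linarith
  have hkey := EV_fatou_key Q Qe hQ hQe s fs hc' φ hφ hεpos hφp
  rw [show r' + (r - r') = r from by ring] at hkey
  exact absurd hkey (not_le.2 hrE)

end UEP
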